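/- arXiv:1310.8378 — 6 statements merged into one kernel-verified Lean document; each statement's English description precedes it below -/
import Mathlib

section
/- For every permutation π and every positive integer n, T_n(π) ≤ 15^{ex(n,π)}. -/
open Filter

/-- A binary matrix `A` contains a binary matrix `P` (as a submatrix pattern):
there are strictly increasing choices of rows and columns such that `A` has a
one wherever `P` does. -/
def ContainsMat {k l m n : ℕ} (P : Fin k → Fin l → Bool) (A : Fin m → Fin n → Bool) : Prop :=
  ∃ (r : Fin k → Fin m) (c : Fin l → Fin n), StrictMono r ∧ StrictMono c ∧
    ∀ i j, P i j = true → A (r i) (c j) = true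

/-- The permutation matrix of a permutation of `{1,…,k}`. -/
def permMatrix {k : ℕ} (π : Equiv.Perm (Fin k)) : Fin k → Fin k → Bool :=
  fun i j => decide (π i = j)

/-- The mass of a binary matrix: the number of its one-entries. -/
def mass {m n : ℕ} (A : Fin m → Fin n → Bool) : ℕ :=
  (Finset.univ.filter fun p : Fin m × Fin n => A p.1 p.2 = true).card

/-- A binary matrix avoids a permutation if it avoids its permutation matrix. -/
def AvoidsPerm {k m n : ℕ} (A : Fin m → Fin n → Bool) (π : Equiv.Perm (Fin k)) : Prop :=
  ¬ ContainsMat (permMatrix π) A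

/-- `ex n π`: the maximum mass of an `n × n` binary matrix avoiding `π`. -/
noncomputable def exP {k : ℕ} (n : ℕ) (π : Equiv.Perm (Fin k)) : ℕ :=
  sSup {m | ∃ A : Fin n → Fin n → Bool, AvoidsPerm A π ∧ mass A = m}

/-- `ex n U` for a set `U` of permutations: the maximum mass of an `n × n`
binary matrix avoiding every permutation in `U`. -/
noncomputable def exU {k : ℕ} (n : ℕ) (U : Finset (Equiv.Perm (Fin k))) : ℕ :=
  sSup {m | ∃ A : Fin n → Fin n → Bool, (∀ π ∈ U, AvoidsPerm A π) ∧ mass A = m}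

/-- An `n`-permutation `σ` contains a `k`-permutation `π`. -/
def PermContains {n k : ℕ} (σ : Equiv.Perm (Fin n)) (π : Equiv.Perm (Fin k)) : Prop :=
  ∃ x : Fin k → Fin n, StrictMono x ∧ ∀ i j, σ (x i) < σ (x j) ↔ π i < π j

/-- `S n π`: the number of `n`-permutations avoiding `π`. -/
noncomputable def SP {k : ℕ} (n : ℕ) (π : Equiv.Perm (Fin k)) : ℕ :=
  Nat.card {σ : Equiv.Perm (Fin n) // ¬ PermContains σ π}

/-- `S n U`: the number of `n`-permutations avoiding every permutation in `U`. -/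
noncomputable def SU {k : ℕ} (n : ℕ) (U : Finset (Equiv.Perm (Fin k))) : ℕ :=
  Nat.card {σ : Equiv.Perm (Fin n) // ∀ π ∈ U, ¬ PermContains σ π}

/-- `T n π`: the number of `n × n` binary matrices avoiding `π`. -/
noncomputable def TP {k : ℕ} (n : ℕ) (π : Equiv.Perm (Fin k)) : ℕ :=
  Nat.card {A : Fin n → Fin n → Bool // AvoidsPerm A π}

/-- `P` is an interval minor of `A`: there are ordered disjoint row intervals
`[rlo a, rhi a]` and column intervals `[clo b, chi b]` such that wherever `P`
has a one, the corresponding block of `A` contains a one. -/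
def IntervalMinor {k l m n : ℕ} (P : Fin k → Fin l → Bool) (A : Fin m → Fin n → Bool) : Prop :=
  ∃ (rlo rhi : Fin k → Fin m) (clo chi : Fin l → Fin n),
    (∀ a, rlo a ≤ rhi a) ∧ (∀ a b, a < b → rhi a < rlo b) ∧
    (∀ a, clo a ≤ chi a) ∧ (∀ a b, a < b → chi a < clo b) ∧
    ∀ a b, P a b = true → ∃ i j, rlo a ≤ i ∧ i ≤ rhi a ∧ clo b ≤ j ∧ j ≤ chi b ∧ A i j = true

/-- The all-ones `k × l` binary matrix. -/
def J (k l : ℕ) : Fin k → Fin l → Bool := fun _ _ => true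

/-- `m n P`: the maximum mass of an `n × n` binary matrix avoiding `P` as an
interval minor. -/
noncomputable def mP {k l : ℕ} (n : ℕ) (P : Fin k → Fin l → Bool) : ℕ :=
  sSup {m | ∃ A : Fin n → Fin n → Bool, ¬ IntervalMinor P A ∧ mass A = m}

/-- `f_P(t,s)`: the supremum (in `ℕ∞`) of those `N` for which there is an
`N × t` binary matrix with at least `s` ones in each row avoiding `P` as an
interval minor. -/
noncomputable def fP {k l : ℕ} (P : Fin k → Fin l → Bool) (t s : ℕ) : ℕ∞ :=
  sSup {x : ℕ∞ | ∃ N : ℕ, x = (N : ℕ∞) ∧ ∃ A : Fin N → Fin t → Bool,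
    (∀ i, s ≤ (Finset.univ.filter fun j => A i j = true).card) ∧ ¬ IntervalMinor P A}

/-- `g_P(t,s)`: the supremum (in `ℕ∞`) of those `N` for which there is a
`t × N` binary matrix with at least `s` ones in each column avoiding `P` as an
interval minor. -/
noncomputable def gP {k l : ℕ} (P : Fin k → Fin l → Bool) (t s : ℕ) : ℕ∞ :=
  sSup {x : ℕ∞ | ∃ N : ℕ, x = (N : ℕ∞) ∧ ∃ A : Fin t → Fin N → Bool,
    (∀ j, s ≤ (Finset.univ.filter fun i => A i j = true).card) ∧ ¬ IntervalMinor P A}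

-- chunk 1: basic lemmas
open Finset Classical in
lemma prefix_iff {k : ℕ} {S : Finset (Fin k)}
    (hdc : ∀ i j : Fin k, i ≤ j → j ∈ S → i ∈ S) (i : Fin k) :
    i ∈ S ↔ (i : ℕ) < S.card := by
  constructor
  · intro hi
    have hsub : Finset.Iic i ⊆ S := fun b hb => hdc b i (Finset.mem_Iic.mp hb) hi
    have := Finset.card_le_card hsub
    rw [Fin.card_Iic] at this
    omega
  · intro hi
    by_contra hns
    have hsub : S ⊆ Finset.Iio i := by
      intro j hj
      rw [Finset.mem_Iio]
      by_contra hji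
      exact hns (hdc i j (le_of_not_gt hji) hj)
    have := Finset.card_le_card hsub
    rw [Fin.card_Iio] at this
    omega

open Finset in
lemma perm_pref_surj {k s : ℕ} (π : Equiv.Perm (Fin k))
    (h : ∀ i : Fin k, (i : ℕ) < s → (π i : ℕ) < s)
    (b : Fin k) (hb : (b : ℕ) < s) : ∃ i : Fin k, (i : ℕ) < s ∧ π i = b := by
  classical
  set S := Finset.univ.filter (fun j : Fin k => (j : ℕ) < s) with hS
  have himg : S.image π = S := by
    apply Finset.eq_of_subset_of_card_le
    · intro x hx
      rcases Finset.mem_image.mp hx with ⟨j, hj, rfl⟩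
      simp only [hS, Finset.mem_filter, Finset.mem_univ, true_and] at hj ⊢
      exact h j hj
    · rw [Finset.card_image_of_injective _ π.injective]
  have hbmem : b ∈ S.image π := by rw [himg]; simp [hS, hb]
  rcases Finset.mem_image.mp hbmem with ⟨i, hi, rfl⟩
  exact ⟨i, by simpa [hS] using hi, rfl⟩

lemma perm_maps_prefix {k s : ℕ} (π : Equiv.Perm (Fin k))
    (h : ∀ i : Fin k, s ≤ (i : ℕ) → s ≤ (π i : ℕ)) :
    ∀ i : Fin k, (i : ℕ) < s → (π i : ℕ) < s := by
  intro i hi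
  by_contra hge
  push_neg at hge
  classical
  set Suf : Finset (Fin k) := Finset.univ.filter (fun j : Fin k => s ≤ (j : ℕ)) with hS
  have himg : Suf.image π = Suf := by
    apply Finset.eq_of_subset_of_card_le
    · intro x hx
      rcases Finset.mem_image.mp hx with ⟨j, hj, rfl⟩
      simp only [hS, Finset.mem_filter, Finset.mem_univ, true_and] at hj ⊢
      exact h j hj
    · rw [Finset.card_image_of_injective _ π.injective]
  have hmem : π i ∈ Suf := by simp [hS, hge]
  rw [← himg] at hmem
  rcases Finset.mem_image.mp hmem with ⟨j, hj, hji⟩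
  have hji' := π.injective hji
  subst hji'
  simp only [hS, Finset.mem_filter, Finset.mem_univ, true_and] at hj
  omega

def SumInd {k : ℕ} (π : Equiv.Perm (Fin k)) : Prop :=
  ∀ s : ℕ, 0 < s → s < k → ¬ (∀ i : Fin k, (i : ℕ) < s → (π i : ℕ) < s)

lemma zero_avoids {k n : ℕ} (π : Equiv.Perm (Fin k)) (hk : 0 < k) :
    AvoidsPerm (fun _ _ => false : Fin n → Fin n → Bool) π := by
  rintro ⟨r, c, hr, hc, hP⟩
  have := hP ⟨0, hk⟩ (π ⟨0, hk⟩) (by simp [permMatrix])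
  simp at this

lemma mass_le {m n : ℕ} (A : Fin m → Fin n → Bool) : mass A ≤ m * n := by
  classical
  have h := Finset.card_filter_le (Finset.univ : Finset (Fin m × Fin n))
      (fun p => A p.1 p.2 = true)
  simpa [mass] using h

lemma exP_bdd {k n : ℕ} (π : Equiv.Perm (Fin k)) :
    BddAbove {m | ∃ A : Fin n → Fin n → Bool, AvoidsPerm A π ∧ mass A = m} := by
  refine ⟨n * n, ?_⟩
  rintro x ⟨A, _, rfl⟩
  exact mass_le A

lemma le_exP {k n : ℕ} {π : Equiv.Perm (Fin k)} {A : Fin n → Fin n → Bool}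
    (hA : AvoidsPerm A π) : mass A ≤ exP n π :=
  le_csSup (exP_bdd π) ⟨A, hA, rfl⟩

lemma exP_exists {k : ℕ} (n : ℕ) (π : Equiv.Perm (Fin k)) (hk : 0 < k) :
    ∃ A : Fin n → Fin n → Bool, AvoidsPerm A π ∧ mass A = exP n π := by
  have hne : {m | ∃ A : Fin n → Fin n → Bool, AvoidsPerm A π ∧ mass A = m}.Nonempty :=
    ⟨_, ⟨_, zero_avoids π hk, rfl⟩⟩
  exact Nat.sSup_mem hne (exP_bdd π)

lemma avoids_mono {k n n' : ℕ} {π : Equiv.Perm (Fin k)} {A B : Fin n → Fin n' → Bool}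
    (h : ∀ i j, B i j = true → A i j = true) (hA : AvoidsPerm A π) : AvoidsPerm B π := by
  rintro ⟨r, c, hr, hc, hP⟩
  exact hA ⟨r, c, hr, hc, fun i j hij => h _ _ (hP i j hij)⟩
-- chunk 2: dichotomy and flip transfer
lemma sumInd_or {k : ℕ} (π : Equiv.Perm (Fin k)) (hk : 0 < k) :
    SumInd π ∨ SumInd (π.trans (Fin.revPerm)) := by
  by_contra hcon
  push_neg at hcon
  obtain ⟨h1, h2⟩ := hcon
  rw [SumInd] at h1 h2
  push_neg at h1 h2
  obtain ⟨s, hs0, hsk, Hs⟩ := h1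
  obtain ⟨t, ht0, htk, Ht⟩ := h2
  rcases le_or_gt s t with hst | hts
  · obtain ⟨i, his, hiz⟩ := perm_pref_surj π Hs ⟨0, hk⟩ hs0
    have h3 := Ht i (by omega)
    rw [Equiv.trans_apply, hiz] at h3
    simp only [Fin.revPerm_apply, Fin.val_rev] at h3
    omega
  · obtain ⟨i, hit, hiz⟩ := perm_pref_surj (π.trans Fin.revPerm) Ht ⟨0, hk⟩ ht0
    have h3 := Hs i (by omega)
    have h4 : π i = Fin.rev ⟨0, hk⟩ := by
      have h5 : Fin.rev (π i) = (⟨0, hk⟩ : Fin k) := hiz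
      have h6 := congrArg Fin.rev h5
      simpa [Fin.rev_rev] using h6
    rw [h4] at h3
    simp only [Fin.val_rev] at h3
    omega

def flipM {n : ℕ} (A : Fin n → Fin n → Bool) : Fin n → Fin n → Bool :=
  fun i j => A i (Fin.rev j)

lemma flipM_flipM {n : ℕ} (A : Fin n → Fin n → Bool) : flipM (flipM A) = A := by
  funext i j
  simp [flipM, Fin.rev_rev]

lemma perm_flip_flip {k : ℕ} (π : Equiv.Perm (Fin k)) :
    (π.trans Fin.revPerm).trans Fin.revPerm = π := by
  ext i
  simp [Fin.rev_rev]

lemma contains_flip {k n : ℕ} (π : Equiv.Perm (Fin k)) (A : Fin n → Fin n → Bool)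
    (h : ContainsMat (permMatrix π) A) :
    ContainsMat (permMatrix (π.trans Fin.revPerm)) (flipM A) := by
  obtain ⟨r, c, hr, hc, hP⟩ := h
  refine ⟨r, fun b => Fin.rev (c (Fin.rev b)), hr, ?_, ?_⟩
  · intro b b' hbb
    have h1 : Fin.rev b' < Fin.rev b := Fin.rev_lt_rev.mpr hbb
    have h2 := hc h1
    exact Fin.rev_lt_rev.mpr h2
  · intro i j hij
    have hj : (π.trans Fin.revPerm) i = j := of_decide_eq_true hij
    have hj' : Fin.rev j = π i := by
      rw [← hj]; simp [Fin.rev_rev]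
    simp only [flipM, Fin.rev_rev, hj']
    exact hP i (π i) (by simp [permMatrix])

lemma avoid_flip {k n : ℕ} (π : Equiv.Perm (Fin k)) (A : Fin n → Fin n → Bool) :
    AvoidsPerm A π ↔ AvoidsPerm (flipM A) (π.trans Fin.revPerm) := by
  constructor
  · intro hA hC
    have := contains_flip _ _ hC
    rw [flipM_flipM, perm_flip_flip] at this
    exact hA this
  · intro hA hC
    exact hA (contains_flip _ _ hC)

lemma avoid_flip' {k n : ℕ} (π : Equiv.Perm (Fin k)) (A : Fin n → Fin n → Bool) :
    AvoidsPerm A (π.trans Fin.revPerm) ↔ AvoidsPerm (flipM A) π := by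
  have h := avoid_flip π (flipM A)
  rw [flipM_flipM] at h
  exact h.symm

open Finset in
lemma mass_flip {n : ℕ} (A : Fin n → Fin n → Bool) : mass (flipM A) = mass A := by
  classical
  rw [mass, mass]
  refine Finset.card_equiv (Equiv.prodCongr (Equiv.refl _) Fin.revPerm) ?_
  intro p
  simp only [Finset.mem_filter, Finset.mem_univ, true_and]; simp [flipM]

lemma exP_flip {k n : ℕ} (π : Equiv.Perm (Fin k)) :
    exP n (π.trans Fin.revPerm) = exP n π := by
  rw [exP, exP]
  congr 1
  ext x
  constructor
  · rintro ⟨A, hA, rfl⟩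
    exact ⟨flipM A, (avoid_flip' π A).mp hA, mass_flip A⟩
  · rintro ⟨A, hA, rfl⟩
    exact ⟨flipM A, (avoid_flip π A).mp hA, mass_flip A⟩

lemma TP_flip {k n : ℕ} (π : Equiv.Perm (Fin k)) :
    TP n (π.trans Fin.revPerm) = TP n π := by
  rw [TP, TP]
  apply Nat.card_congr
  exact ⟨fun A => ⟨flipM A.1, (avoid_flip' π A.1).mp A.2⟩,
    fun A => ⟨flipM A.1, (avoid_flip π A.1).mp A.2⟩,
    fun A => Subtype.ext (flipM_flipM A.1),
    fun A => Subtype.ext (flipM_flipM A.1)⟩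
-- chunk 3: glue
def glueM {m n : ℕ} (ε : ℕ) (A D : Fin m → Fin m → Bool) : Fin n → Fin n → Bool :=
  fun i j =>
    ((if h : (i : ℕ) < m ∧ (j : ℕ) < m then A ⟨i, h.1⟩ ⟨j, h.2⟩ else false) ||
     (if h : m - ε ≤ (i : ℕ) ∧ m - ε ≤ (j : ℕ) ∧ (i : ℕ) - (m - ε) < m ∧ (j : ℕ) - (m - ε) < m
      then D ⟨(i : ℕ) - (m - ε), h.2.2.1⟩ ⟨(j : ℕ) - (m - ε), h.2.2.2⟩ else false))

lemma glue_avoids {k m n ε : ℕ} {π : Equiv.Perm (Fin k)} (hπ : SumInd π)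
    (hε : ε ≤ 1) (hm : 0 < m) (hn : m + m = n + ε)
    {A D : Fin m → Fin m → Bool} (hA : AvoidsPerm A π) (hD : AvoidsPerm D π)
    (hcorner : ε = 1 → D ⟨0, hm⟩ ⟨0, hm⟩ = false) :
    AvoidsPerm (glueM (n := n) ε A D) π := by
  classical
  rintro ⟨r, c, hr, hc, hP⟩
  have hone : ∀ i : Fin k, glueM (n := n) ε A D (r i) (c (π i)) = true := by
    intro i
    exact hP i (π i) (by simp [permMatrix])
  set μ := m - ε with hμ
  have hsub : ∀ x : Fin n, (x : ℕ) - μ < m := by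
    intro x
    have := x.isLt
    omega
  set Ap : Fin k → Prop := fun i => (r i : ℕ) < m ∧ (c (π i) : ℕ) < m with hApdef
  -- L1
  have hL1 : ∀ i, ∀ h : Ap i, A ⟨r i, h.1⟩ ⟨c (π i), h.2⟩ = true := by
    intro i h
    have h1 := hone i
    rw [glueM] at h1
    simp only [Bool.or_eq_true] at h1
    rcases h1 with h1 | h1
    · rwa [dif_pos h] at h1
    · by_cases h2 : μ ≤ (r i : ℕ) ∧ μ ≤ (c (π i) : ℕ) ∧ (r i : ℕ) - μ < m ∧ (c (π i) : ℕ) - μ < m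
      · rw [dif_pos h2] at h1
        have hε1 : ε = 1 := by omega
        have hr0 : ((r i : ℕ) - μ) = 0 := by omega
        have hc0 : ((c (π i) : ℕ) - μ) = 0 := by omega
        have : (⟨(r i : ℕ) - μ, h2.2.2.1⟩ : Fin m) = ⟨0, hm⟩ := Fin.ext hr0
        rw [this] at h1
        have : (⟨(c (π i) : ℕ) - μ, h2.2.2.2⟩ : Fin m) = ⟨0, hm⟩ := Fin.ext hc0
        rw [this] at h1
        rw [hcorner hε1] at h1
        exact absurd h1 (by simp)
      · rw [dif_neg h2] at h1
        exact absurd h1 (by simp)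
  -- L2
  have hL2 : ∀ i, ¬ Ap i → μ ≤ (r i : ℕ) ∧ μ ≤ (c (π i) : ℕ) ∧
      D ⟨(r i : ℕ) - μ, hsub (r i)⟩ ⟨(c (π i) : ℕ) - μ, hsub (c (π i))⟩ = true := by
    intro i h
    have h1 := hone i
    rw [glueM] at h1
    simp only [Bool.or_eq_true] at h1
    rcases h1 with h1 | h1
    · by_cases h2 : (r i : ℕ) < m ∧ (c (π i) : ℕ) < m
      · exact absurd h2 h
      · rw [dif_neg h2] at h1
        exact absurd h1 (by simp)
    · by_cases h2 : μ ≤ (r i : ℕ) ∧ μ ≤ (c (π i) : ℕ) ∧ (r i : ℕ) - μ < m ∧ (c (π i) : ℕ) - μ < m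
      · rw [dif_pos h2] at h1
        exact ⟨h2.1, h2.2.1, h1⟩
      · rw [dif_neg h2] at h1
        exact absurd h1 (by simp)
  -- S is a prefix
  set S : Finset (Fin k) := Finset.univ.filter (fun i => Ap i) with hSdef
  have hmemS : ∀ i, i ∈ S ↔ Ap i := by
    intro i; simp [hSdef]
  have hdc : ∀ i j : Fin k, i ≤ j → j ∈ S → i ∈ S := by
    intro i j hij hj
    rcases eq_or_lt_of_le hij with rfl | hij'
    · exact hj
    rw [hmemS] at hj ⊢
    by_contra hni
    have h2 := hL2 i hni
    have h3 : (r i : ℕ) < (r j : ℕ) := hr hij'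
    have h4 := hj.1
    omega
  set s := S.card with hs
  have hSiff : ∀ i : Fin k, Ap i ↔ (i : ℕ) < s := by
    intro i
    rw [← hmemS]
    exact prefix_iff hdc i
  -- column prefix sets
  set Vlo : Finset (Fin k) := Finset.univ.filter (fun b => (c b : ℕ) < m) with hVlo
  set Vhic : Finset (Fin k) := Finset.univ.filter (fun b => (c b : ℕ) < μ) with hVhic
  have hVloiff : ∀ b : Fin k, (c b : ℕ) < m ↔ (b : ℕ) < Vlo.card := by
    intro b
    have hdc' : ∀ i j : Fin k, i ≤ j → j ∈ Vlo → i ∈ Vlo := by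
      intro i j hij hj
      simp only [hVlo, Finset.mem_filter, Finset.mem_univ, true_and] at hj ⊢
      have : (c i : ℕ) ≤ (c j : ℕ) := by
        rcases eq_or_lt_of_le hij with rfl | h
        · exact le_refl _
        · exact le_of_lt (hc h)
      omega
    have := prefix_iff hdc' b
    simp only [hVlo, Finset.mem_filter, Finset.mem_univ, true_and] at this
    exact this
  have hVhiiff : ∀ b : Fin k, (c b : ℕ) < μ ↔ (b : ℕ) < Vhic.card := by
    intro b
    have hdc' : ∀ i j : Fin k, i ≤ j → j ∈ Vhic → i ∈ Vhic := by
      intro i j hij hj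
      simp only [hVhic, Finset.mem_filter, Finset.mem_univ, true_and] at hj ⊢
      have : (c i : ℕ) ≤ (c j : ℕ) := by
        rcases eq_or_lt_of_le hij with rfl | h
        · exact le_refl _
        · exact le_of_lt (hc h)
      omega
    have := prefix_iff hdc' b
    simp only [hVhic, Finset.mem_filter, Finset.mem_univ, true_and] at this
    exact this
  set u := Vlo.card with hu
  set w := Vhic.card with hw
  -- s ≤ u
  have hsu : s ≤ u := by
    have : S.image π ⊆ Vlo := by
      intro x hx
      rcases Finset.mem_image.mp hx with ⟨i, hi, rfl⟩
      rw [hmemS] at hi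
      simp only [hVlo, Finset.mem_filter, Finset.mem_univ, true_and]
      exact hi.2
    have h2 := Finset.card_le_card this
    rwa [Finset.card_image_of_injective _ π.injective] at h2
  -- w ≤ s : π maps complement of S into complement of Vhic
  have hws : w ≤ s := by
    have hsub2 : Sᶜ.image π ⊆ Vhicᶜ := by
      intro x hx
      rcases Finset.mem_image.mp hx with ⟨i, hi, rfl⟩
      rw [Finset.mem_compl] at hi ⊢
      rw [hmemS] at hi
      have h2 := hL2 i hi
      simp only [hVhic, Finset.mem_filter, Finset.mem_univ, true_and]
      omega
    have h2 := Finset.card_le_card hsub2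
    rw [Finset.card_image_of_injective _ π.injective] at h2
    rw [Finset.card_compl, Finset.card_compl] at h2
    simp only [Fintype.card_fin] at h2
    have h3 : s ≤ k := by
      have := Finset.card_le_univ S
      simpa using this
    have h4 : w ≤ k := by
      have := Finset.card_le_univ Vhic
      simpa using this
    omega
  -- u ≤ w + 1 (and u ≤ w when ε = 0)
  have huw : u ≤ w + ε := by
    have hsdiff : (Vlo \ Vhic).card ≤ ε := by
      by_cases hε0 : ε = 0
      · subst hε0
        have : Vlo \ Vhic = ∅ := by
          rw [Finset.sdiff_eq_empty_iff_subset]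
          intro b hb
          simp only [hVlo, Finset.mem_filter, Finset.mem_univ, true_and] at hb
          simp only [hVhic, Finset.mem_filter, Finset.mem_univ, true_and]
          omega
        rw [this]; simp
      · have hε1 : ε = 1 := by omega
        rw [hε1]
        rw [Finset.card_le_one]
        intro a ha b hb
        simp only [Finset.mem_sdiff, hVlo, hVhic, Finset.mem_filter, Finset.mem_univ,
          true_and, not_lt] at ha hb
        have hca : (c a : ℕ) = μ := by omega
        have hcb : (c b : ℕ) = μ := by omega
        have : c a = c b := Fin.ext (by omega)
        exact hc.injective this
    have := Finset.card_le_card_sdiff_add_card (s := Vlo) (t := Vhic)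
    omega
  -- breakpoint at s
  have hbp : ∀ i : Fin k, (i : ℕ) < s → (π i : ℕ) < s := by
    rcases le_or_gt u s with hus | hsu'
    · -- u = s
      have hueq : u = s := le_antisymm hus hsu
      intro i hi
      have hap : Ap i := (hSiff i).mpr hi
      have := (hVloiff (π i)).mp hap.2
      omega
    · -- u ≥ s + 1 → w = s
      have hweq : s ≤ w := by omega
      have hweq' : w = s := le_antisymm hws hweq
      apply perm_maps_prefix
      intro i hi
      have hni : ¬ Ap i := by
        rw [hSiff]
        omega
      have h2 := hL2 i hni
      have h3 : ¬ ((c (π i) : ℕ) < μ) := by omega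
      rw [hVhiiff] at h3
      omega
  -- SumInd: s = 0 or s = k
  have hsk : s ≤ k := by
    have := Finset.card_le_univ S
    simpa using this
  have hs0k : s = 0 ∨ s = k := by
    by_contra hcon
    push_neg at hcon
    exact hπ s (by omega) (by omega) hbp
  rcases hs0k with hs0 | hskk
  · -- all in D
    have hallD : ∀ i : Fin k, ¬ Ap i := by
      intro i
      rw [hSiff]
      omega
    have hcall : ∀ b : Fin k, μ ≤ (c b : ℕ) := by
      intro b
      have := (hL2 (π.symm b) (hallD _)).2.1
      rwa [Equiv.apply_symm_apply] at this
    refine hD ⟨fun i => ⟨(r i : ℕ) - μ, hsub (r i)⟩,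
               fun b => ⟨(c b : ℕ) - μ, hsub (c b)⟩, ?_, ?_, ?_⟩
    · intro i j hij
      have h1 := (hL2 i (hallD i)).1
      have h2 : (r i : ℕ) < (r j : ℕ) := hr hij
      simp only [Fin.mk_lt_mk]
      omega
    · intro b b' hbb
      have h1 := hcall b
      have h2 : (c b : ℕ) < (c b' : ℕ) := hc hbb
      simp only [Fin.mk_lt_mk]
      omega
    · intro i j hij
      have hj : π i = j := of_decide_eq_true hij
      subst hj
      exact (hL2 i (hallD i)).2.2
  · -- all in A
    have hallA : ∀ i : Fin k, Ap i := by
      intro i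
      rw [hSiff, hskk]
      exact i.isLt
    have hcall : ∀ b : Fin k, (c b : ℕ) < m := by
      intro b
      have := (hallA (π.symm b)).2
      rwa [Equiv.apply_symm_apply] at this
    refine hA ⟨fun i => ⟨(r i : ℕ), (hallA i).1⟩,
               fun b => ⟨(c b : ℕ), hcall b⟩, ?_, ?_, ?_⟩
    · intro i j hij
      simp only [Fin.mk_lt_mk]
      exact hr hij
    · intro b b' hbb
      simp only [Fin.mk_lt_mk]
      exact hc hbb
    · intro i j hij
      have hj : π i = j := of_decide_eq_true hij
      subst hj
      exact hL1 i (hallA i)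
-- chunk 4: glue mass
lemma glueM_eq_A {m n ε : ℕ} (hε : ε ≤ 1) (hm : 0 < m) (hn : m + m = n + ε)
    {A D : Fin m → Fin m → Bool} (hcorner : ε = 1 → D ⟨0, hm⟩ ⟨0, hm⟩ = false)
    (i j : Fin n) (hi : (i : ℕ) < m) (hj : (j : ℕ) < m) :
    glueM (n := n) ε A D i j = A ⟨i, hi⟩ ⟨j, hj⟩ := by
  rw [glueM, dif_pos ⟨hi, hj⟩]
  by_cases h2 : m - ε ≤ (i : ℕ) ∧ m - ε ≤ (j : ℕ) ∧ (i : ℕ) - (m - ε) < m ∧ (j : ℕ) - (m - ε) < m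
  · rw [dif_pos h2]
    have hε1 : ε = 1 := by omega
    have e1 : (⟨(i : ℕ) - (m - ε), h2.2.2.1⟩ : Fin m) = ⟨0, hm⟩ :=
      Fin.ext (show (i : ℕ) - (m - ε) = 0 by omega)
    have e2 : (⟨(j : ℕ) - (m - ε), h2.2.2.2⟩ : Fin m) = ⟨0, hm⟩ :=
      Fin.ext (show (j : ℕ) - (m - ε) = 0 by omega)
    rw [e1, e2, hcorner hε1]
    simp
  · rw [dif_neg h2]
    simp

lemma glueM_D_of {m n ε : ℕ} (hε : ε ≤ 1) (hm : 0 < m) (hn : m + m = n + ε)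
    {A D : Fin m → Fin m → Bool}
    (i j : Fin n) (h : glueM (n := n) ε A D i j = true)
    (hnb : ¬((i : ℕ) < m ∧ (j : ℕ) < m)) :
    m - ε ≤ (i : ℕ) ∧ m - ε ≤ (j : ℕ) ∧
      D ⟨(i : ℕ) - (m - ε), by have := i.isLt; omega⟩
        ⟨(j : ℕ) - (m - ε), by have := j.isLt; omega⟩ = true := by
  rw [glueM] at h
  simp only [Bool.or_eq_true] at h
  rcases h with h | h
  · rw [dif_neg hnb] at h
    exact absurd h (by simp)
  · by_cases h2 : m - ε ≤ (i : ℕ) ∧ m - ε ≤ (j : ℕ) ∧ (i : ℕ) - (m - ε) < m ∧ (j : ℕ) - (m - ε) < m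
    · rw [dif_pos h2] at h
      exact ⟨h2.1, h2.2.1, h⟩
    · rw [dif_neg h2] at h
      exact absurd h (by simp)

lemma glueM_of_D {m n ε : ℕ} (hε : ε ≤ 1) (hm : 0 < m) (hn : m + m = n + ε)
    {A D : Fin m → Fin m → Bool}
    (i j : Fin m) (i' j' : Fin n) (hi' : (i' : ℕ) = (i : ℕ) + (m - ε))
    (hj' : (j' : ℕ) = (j : ℕ) + (m - ε)) (h : D i j = true) :
    glueM (n := n) ε A D i' j' = true := by
  rw [glueM]
  have hilt := i.isLt
  have hjlt := j.isLt
  have h2 : m - ε ≤ (i' : ℕ) ∧ m - ε ≤ (j' : ℕ) ∧ (i' : ℕ) - (m - ε) < m ∧ (j' : ℕ) - (m - ε) < m := by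
    omega
  rw [dif_pos h2]
  have e1 : (⟨(i' : ℕ) - (m - ε), h2.2.2.1⟩ : Fin m) = i :=
    Fin.ext (show (i' : ℕ) - (m - ε) = (i : ℕ) by omega)
  have e2 : (⟨(j' : ℕ) - (m - ε), h2.2.2.2⟩ : Fin m) = j :=
    Fin.ext (show (j' : ℕ) - (m - ε) = (j : ℕ) by omega)
  rw [e1, e2, h]
  simp

open Finset in
lemma glue_mass {m n ε : ℕ} (hε : ε ≤ 1) (hm : 0 < m) (hn : m + m = n + ε)
    (A D : Fin m → Fin m → Bool) (hcorner : ε = 1 → D ⟨0, hm⟩ ⟨0, hm⟩ = false) :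
    mass (glueM (n := n) ε A D) = mass A + mass D := by
  classical
  set G : Finset (Fin n × Fin n) :=
    Finset.univ.filter (fun p : Fin n × Fin n => glueM (n := n) ε A D p.1 p.2 = true) with hG
  have hmassG : mass (glueM (n := n) ε A D) = G.card := rfl
  set Q : Fin n × Fin n → Prop := fun p => (p.1 : ℕ) < m ∧ (p.2 : ℕ) < m with hQ
  have hsplit : G.card = (G.filter Q).card + (G.filter (fun p => ¬ Q p)).card :=
    (Finset.card_filter_add_card_filter_not _).symm
  have hcard1 : (G.filter Q).card = mass A := by
    rw [mass]
    refine Finset.card_bij'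
      (fun p (_ : p ∈ G.filter Q) =>
        ((⟨min (p.1 : ℕ) (m - 1), by omega⟩ : Fin m), (⟨min (p.2 : ℕ) (m - 1), by omega⟩ : Fin m)))
      (fun q (_ : q ∈ Finset.univ.filter (fun q : Fin m × Fin m => A q.1 q.2 = true)) =>
        ((⟨(q.1 : ℕ), by have := q.1.isLt; omega⟩ : Fin n), (⟨(q.2 : ℕ), by have := q.2.isLt; omega⟩ : Fin n)))
      ?_ ?_ ?_ ?_
    · intro p hp
      simp only [hG, hQ, Finset.mem_filter, Finset.mem_univ, true_and] at hp ⊢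
      obtain ⟨hg, h1, h2⟩ := hp
      have e1 : (⟨min (p.1 : ℕ) (m - 1), by omega⟩ : Fin m) = ⟨(p.1 : ℕ), h1⟩ :=
        Fin.ext (show min (p.1 : ℕ) (m - 1) = (p.1 : ℕ) by omega)
      have e2 : (⟨min (p.2 : ℕ) (m - 1), by omega⟩ : Fin m) = ⟨(p.2 : ℕ), h2⟩ :=
        Fin.ext (show min (p.2 : ℕ) (m - 1) = (p.2 : ℕ) by omega)
      rw [e1, e2]
      rw [glueM_eq_A hε hm hn hcorner p.1 p.2 h1 h2] at hg
      exact hg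
    · intro q hq
      simp only [hG, hQ, Finset.mem_filter, Finset.mem_univ, true_and] at hq ⊢
      have h1 : ((⟨(q.1 : ℕ), by have := q.1.isLt; omega⟩ : Fin n) : ℕ) < m := q.1.isLt
      have h2 : ((⟨(q.2 : ℕ), by have := q.2.isLt; omega⟩ : Fin n) : ℕ) < m := q.2.isLt
      refine ⟨?_, h1, h2⟩
      rw [glueM_eq_A hε hm hn hcorner _ _ h1 h2]
      have e1 : (⟨(((⟨(q.1 : ℕ), by have := q.1.isLt; omega⟩ : Fin n)) : ℕ), h1⟩ : Fin m) = q.1 :=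
        Fin.ext rfl
      have e2 : (⟨(((⟨(q.2 : ℕ), by have := q.2.isLt; omega⟩ : Fin n)) : ℕ), h2⟩ : Fin m) = q.2 :=
        Fin.ext rfl
      rw [e1, e2]
      exact hq
    · intro p hp
      simp only [hG, hQ, Finset.mem_filter, Finset.mem_univ, true_and] at hp
      obtain ⟨_, h1, h2⟩ := hp
      refine Prod.ext (Fin.ext ?_) (Fin.ext ?_)
      · show min (p.1 : ℕ) (m - 1) = (p.1 : ℕ); omega
      · show min (p.2 : ℕ) (m - 1) = (p.2 : ℕ); omega
    · intro q hq
      refine Prod.ext (Fin.ext ?_) (Fin.ext ?_)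
      · show min (q.1 : ℕ) (m - 1) = (q.1 : ℕ); have := q.1.isLt; omega
      · show min (q.2 : ℕ) (m - 1) = (q.2 : ℕ); have := q.2.isLt; omega
  have hcard2 : (G.filter (fun p => ¬ Q p)).card = mass D := by
    rw [mass]
    refine Finset.card_bij'
      (fun p (_ : p ∈ G.filter (fun p => ¬ Q p)) =>
        ((⟨(p.1 : ℕ) - (m - ε), by have := p.1.isLt; omega⟩ : Fin m),
         (⟨(p.2 : ℕ) - (m - ε), by have := p.2.isLt; omega⟩ : Fin m)))
      (fun q (_ : q ∈ Finset.univ.filter (fun q : Fin m × Fin m => D q.1 q.2 = true)) =>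
        ((⟨(q.1 : ℕ) + (m - ε), by have := q.1.isLt; omega⟩ : Fin n),
         (⟨(q.2 : ℕ) + (m - ε), by have := q.2.isLt; omega⟩ : Fin n)))
      ?_ ?_ ?_ ?_
    · intro p hp
      simp only [hG, hQ, Finset.mem_filter, Finset.mem_univ, true_and] at hp ⊢
      exact (glueM_D_of hε hm hn p.1 p.2 hp.1 hp.2).2.2
    · intro q hq
      simp only [hG, hQ, Finset.mem_filter, Finset.mem_univ, true_and] at hq ⊢
      constructor
      · exact glueM_of_D hε hm hn q.1 q.2 _ _ rfl rfl hq
      · intro hcon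
        have hq1 : (q.1 : ℕ) < ε := by
          have := hcon.1; omega
        have hq2 : (q.2 : ℕ) < ε := by
          have := hcon.2; omega
        have hε1 : ε = 1 := by omega
        have e1 : q.1 = ⟨0, hm⟩ := Fin.ext (show (q.1 : ℕ) = 0 by omega)
        have e2 : q.2 = ⟨0, hm⟩ := Fin.ext (show (q.2 : ℕ) = 0 by omega)
        rw [e1, e2, hcorner hε1] at hq
        exact absurd hq (by simp)
    · intro p hp
      simp only [hG, hQ, Finset.mem_filter, Finset.mem_univ, true_and] at hp
      have h2 := glueM_D_of hε hm hn p.1 p.2 hp.1 hp.2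
      refine Prod.ext (Fin.ext ?_) (Fin.ext ?_)
      · show (p.1 : ℕ) - (m - ε) + (m - ε) = (p.1 : ℕ); omega
      · show (p.2 : ℕ) - (m - ε) + (m - ε) = (p.2 : ℕ); omega
    · intro q hq
      refine Prod.ext (Fin.ext ?_) (Fin.ext ?_)
      · show (q.1 : ℕ) + (m - ε) - (m - ε) = (q.1 : ℕ); omega
      · show (q.2 : ℕ) + (m - ε) - (m - ε) = (q.2 : ℕ); omega
  rw [hmassG, hsplit, hcard1, hcard2]
-- chunk 5: contraction
noncomputable def ctr (ε : ℕ) {n m : ℕ} (A : Fin n → Fin n → Bool) : Fin m → Fin m → Bool :=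
  fun a b => if (∃ i j : Fin n, ((i : ℕ) + ε) / 2 = (a : ℕ) ∧ ((j : ℕ) + ε) / 2 = (b : ℕ) ∧ A i j = true)
    then true else false

lemma ctr_iff {ε n m : ℕ} (A : Fin n → Fin n → Bool) (a b : Fin m) :
    ctr ε A a b = true ↔
      ∃ i j : Fin n, ((i : ℕ) + ε) / 2 = (a : ℕ) ∧ ((j : ℕ) + ε) / 2 = (b : ℕ) ∧ A i j = true := by
  rw [ctr]
  by_cases h : ∃ i j : Fin n, ((i : ℕ) + ε) / 2 = (a : ℕ) ∧ ((j : ℕ) + ε) / 2 = (b : ℕ) ∧ A i j = true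
  · rw [if_pos h]; exact ⟨fun _ => h, fun _ => rfl⟩
  · rw [if_neg h]; exact ⟨fun hf => absurd hf (by simp), fun hh => absurd hh h⟩

lemma ctr_avoids {k n m ε : ℕ} {π : Equiv.Perm (Fin k)}
    {A : Fin n → Fin n → Bool} (hA : AvoidsPerm A π) : AvoidsPerm (ctr ε (m := m) A) π := by
  rintro ⟨r, c, hr, hc, hP⟩
  have hone : ∀ p : Fin k, ctr ε (m := m) A (r p) (c (π p)) = true := by
    intro p
    exact hP p (π p) (by simp [permMatrix])
  have hex := fun p => (ctr_iff A (r p) (c (π p))).mp (hone p)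
  choose I J hI hJ hAIJ using hex
  refine hA ⟨fun p => I p, fun b => J (π.symm b), ?_, ?_, ?_⟩
  · intro p q hpq
    have h1 : (r p : ℕ) < (r q : ℕ) := hr hpq
    have h2 := hI p
    have h3 := hI q
    have : (I p : ℕ) < (I q : ℕ) := by omega
    exact this
  · intro b b' hbb
    have h1 : (c b : ℕ) < (c b' : ℕ) := hc hbb
    have h2 := hJ (π.symm b)
    have h3 := hJ (π.symm b')
    rw [Equiv.apply_symm_apply] at h2 h3
    have : (J (π.symm b) : ℕ) < (J (π.symm b') : ℕ) := by omega
    exact this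
  · intro p q hpq
    have h : π p = q := of_decide_eq_true hpq
    subst h
    show A (I p) (J (π.symm (π p))) = true
    rw [Equiv.symm_apply_apply]
    exact hAIJ p

-- masked matrix: B with the (0,0) entry zeroed out when ε = 1
def maskB (ε : ℕ) {m : ℕ} (B : Fin m → Fin m → Bool) : Fin m → Fin m → Bool :=
  fun a b => if ε = 1 ∧ (a : ℕ) = 0 ∧ (b : ℕ) = 0 then false else B a b

lemma maskB_le {ε m : ℕ} (B : Fin m → Fin m → Bool) :
    ∀ a b, maskB ε B a b = true → B a b = true := by
  intro a b h
  rw [maskB] at h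
  by_cases h2 : ε = 1 ∧ (a : ℕ) = 0 ∧ (b : ℕ) = 0
  · rw [if_pos h2] at h; exact absurd h (by simp)
  · rwa [if_neg h2] at h

lemma maskB_corner {ε m : ℕ} (hm : 0 < m) (B : Fin m → Fin m → Bool) (hε : ε = 1) :
    maskB ε B ⟨0, hm⟩ ⟨0, hm⟩ = false := by
  rw [maskB, if_pos ⟨hε, rfl, rfl⟩]

open Finset in
lemma mask_mass {ε m : ℕ} (B : Fin m → Fin m → Bool) :
    ∑ p ∈ Finset.univ.filter (fun p : Fin m × Fin m => B p.1 p.2 = true),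
      (if ε = 1 ∧ (p.1 : ℕ) = 0 ∧ (p.2 : ℕ) = 0 then 0 else 1) = mass (maskB ε B) := by
  classical
  have hset : (Finset.univ.filter fun p : Fin m × Fin m => maskB ε B p.1 p.2 = true)
      = (Finset.univ.filter (fun p : Fin m × Fin m => B p.1 p.2 = true)).filter
          (fun p => ¬(ε = 1 ∧ (p.1 : ℕ) = 0 ∧ (p.2 : ℕ) = 0)) := by
    ext p
    simp only [Finset.mem_filter, Finset.mem_univ, true_and]; simp only [maskB]
    constructor
    · intro h
      by_cases hc : ε = 1 ∧ (p.1 : ℕ) = 0 ∧ (p.2 : ℕ) = 0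
      · rw [if_pos hc] at h; exact absurd h (by simp)
      · rw [if_neg hc] at h; exact ⟨h, hc⟩
    · rintro ⟨h, hc⟩; rw [if_neg hc]; exact h
  rw [mass, hset, Finset.sum_ite, Finset.sum_const, Finset.sum_const]
  simp
-- chunk 6: fiber counting
open Finset in
lemma fiber_card_le {n m ε : ℕ} (hε : ε ≤ 1) (hm : 0 < m) (hn : m + m = n + ε)
    (B : Fin m → Fin m → Bool) :
    (Finset.univ.filter fun A : Fin n → Fin n → Bool => ctr ε (m := m) A = B).card
      ≤ 15 ^ mass (maskB ε B) := by
  classical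
  set fib : Fin m → Finset (Fin n) :=
    fun a => Finset.univ.filter (fun i : Fin n => ((i : ℕ) + ε) / 2 = (a : ℕ)) with hfib
  have fib_le2 : ∀ a : Fin m, (fib a).card ≤ 2 := by
    intro a
    have : (fib a).card ≤ (Finset.range 2).card := by
      refine Finset.card_le_card_of_injOn (fun i : Fin n => ((i : ℕ) + ε) % 2) ?_ ?_
      · intro i _
        simp [Nat.mod_lt]; omega
      · intro i hi i' hi' hmod
        simp only [hfib, Finset.coe_filter, Set.mem_setOf_eq, Finset.mem_univ, true_and] at hi hi'
        dsimp only at hmod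
        apply Fin.ext
        omega
    simpa using this
  have fib_le1 : ∀ a : Fin m, ε = 1 → (a : ℕ) = 0 → (fib a).card ≤ 1 := by
    intro a hε1 ha
    rw [Finset.card_le_one]
    intro i hi j hj
    simp only [hfib, Finset.mem_filter, Finset.mem_univ, true_and] at hi hj
    apply Fin.ext
    omega
  set ones : Finset (Fin m × Fin m) :=
    Finset.univ.filter (fun p : Fin m × Fin m => B p.1 p.2 = true) with hones
  set cand : (Fin m × Fin m) → Finset (Fin n → Fin n → Bool) := fun p =>
    Finset.univ.filter (fun M : Fin n → Fin n → Bool =>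
      (∀ i j : Fin n, M i j = true → ((i : ℕ) + ε) / 2 = (p.1 : ℕ) ∧ ((j : ℕ) + ε) / 2 = (p.2 : ℕ))
      ∧ ∃ i j : Fin n, M i j = true) with hcand
  have hinj : (Finset.univ.filter fun A : Fin n → Fin n → Bool => ctr ε (m := m) A = B).card
      ≤ (ones.pi (fun p => cand p)).card := by
    refine Finset.card_le_card_of_injOn
      (fun (A : Fin n → Fin n → Bool) => fun p (_ : p ∈ ones) =>
        (fun i j => if ((i : ℕ) + ε) / 2 = (p.1 : ℕ) ∧ ((j : ℕ) + ε) / 2 = (p.2 : ℕ)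
          then A i j else false)) ?_ ?_
    · intro A hA
      simp only [Finset.mem_coe, Finset.mem_filter, Finset.mem_univ, true_and] at hA
      rw [Finset.mem_coe, Finset.mem_pi]
      intro p hp
      simp only [hcand, Finset.mem_filter, Finset.mem_univ, true_and]
      constructor
      · intro i j hij
        by_cases hc : ((i : ℕ) + ε) / 2 = (p.1 : ℕ) ∧ ((j : ℕ) + ε) / 2 = (p.2 : ℕ)
        · exact hc
        · rw [if_neg hc] at hij; exact absurd hij (by simp)
      · have hB : B p.1 p.2 = true := by simpa [hones] using hp
        rw [← hA] at hB
        obtain ⟨i, j, h1, h2, h3⟩ := (ctr_iff A p.1 p.2).mp hB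
        exact ⟨i, j, by rw [if_pos ⟨h1, h2⟩]; exact h3⟩
    · intro A hA A' hA' heq
      simp only [Finset.coe_filter, Set.mem_setOf_eq, Finset.mem_univ, true_and] at hA hA'
      funext i j
      have hilt : ((i : ℕ) + ε) / 2 < m := by have := i.isLt; omega
      have hjlt : ((j : ℕ) + ε) / 2 < m := by have := j.isLt; omega
      by_cases hB : B ⟨((i : ℕ) + ε) / 2, hilt⟩ ⟨((j : ℕ) + ε) / 2, hjlt⟩ = true
      · have hp : ((⟨((i : ℕ) + ε) / 2, hilt⟩ : Fin m), (⟨((j : ℕ) + ε) / 2, hjlt⟩ : Fin m)) ∈ ones := by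
          simp [hones, hB]
        have h2 := congrFun (congrFun (congrFun (congrFun heq _) hp) i) j
        dsimp only at h2
        rw [if_pos ⟨rfl, rfl⟩, if_pos ⟨rfl, rfl⟩] at h2
        exact h2
      · have hf : ∀ X : Fin n → Fin n → Bool, ctr ε (m := m) X = B → X i j = false := by
          intro X hX
          by_contra hT
          have hT' : X i j = true := by
            cases hXij : X i j
            · exact absurd hXij hT
            · rfl
          have hctr : ctr ε (m := m) X ⟨((i : ℕ) + ε) / 2, hilt⟩ ⟨((j : ℕ) + ε) / 2, hjlt⟩ = true :=
            (ctr_iff X _ _).mpr ⟨i, j, rfl, rfl, hT'⟩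
          rw [hX] at hctr
          exact hB hctr
        rw [hf A hA, hf A' hA']
  have hcc : ∀ p : Fin m × Fin m,
      (cand p).card ≤ 2 ^ ((fib p.1).card * (fib p.2).card) - 1 := by
    intro p
    have hstep : (cand p).card ≤ (((fib p.1) ×ˢ (fib p.2)).powerset.erase ∅).card := by
      refine Finset.card_le_card_of_injOn
        (fun M : Fin n → Fin n → Bool => Finset.univ.filter (fun q : Fin n × Fin n => M q.1 q.2 = true)) ?_ ?_
      · intro M hM
        simp only [hcand, Finset.mem_coe, Finset.mem_filter, Finset.mem_univ, true_and] at hM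
        rw [Finset.mem_coe, Finset.mem_erase, Finset.mem_powerset]
        constructor
        · obtain ⟨i, j, hij⟩ := hM.2
          have : (i, j) ∈ Finset.univ.filter (fun q : Fin n × Fin n => M q.1 q.2 = true) := by
            simp [hij]
          exact Finset.ne_empty_of_mem this
        · intro q hq
          simp only [Finset.mem_filter, Finset.mem_univ, true_and] at hq
          have h2 := hM.1 q.1 q.2 hq
          rw [Finset.mem_product]
          constructor <;> simp [hfib, h2.1, h2.2]
      · intro M hM M' hM' he
        funext i j
        have hiff : M i j = true ↔ M' i j = true := by
          have := Finset.ext_iff.mp he (i, j)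
          simpa using this
        cases h1 : M i j <;> cases h2 : M' i j <;> simp_all
    have hcount : (((fib p.1) ×ˢ (fib p.2)).powerset.erase ∅).card
        = 2 ^ ((fib p.1).card * (fib p.2).card) - 1 := by
      rw [Finset.card_erase_of_mem (Finset.empty_mem_powerset _), Finset.card_powerset,
        Finset.card_product]
    omega
  have hper : ∀ p ∈ ones, (cand p).card
      ≤ 15 ^ (if ε = 1 ∧ (p.1 : ℕ) = 0 ∧ (p.2 : ℕ) = 0 then 0 else 1) := by
    intro p _
    by_cases hc : ε = 1 ∧ (p.1 : ℕ) = 0 ∧ (p.2 : ℕ) = 0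
    · rw [if_pos hc]
      have h1 := fib_le1 p.1 hc.1 hc.2.1
      have h2 := fib_le1 p.2 hc.1 hc.2.2
      have h3 := hcc p
      have h4 : (fib p.1).card * (fib p.2).card ≤ 1 := le_trans (Nat.mul_le_mul h1 h2) (by norm_num)
      have h5 : (2 : ℕ) ^ ((fib p.1).card * (fib p.2).card) ≤ 2 ^ 1 :=
        Nat.pow_le_pow_right (by norm_num) h4
      simp only [pow_zero]
      omega
    · rw [if_neg hc]
      have h1 := fib_le2 p.1
      have h2 := fib_le2 p.2
      have h3 := hcc p
      have h4 : (fib p.1).card * (fib p.2).card ≤ 4 := by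
        calc (fib p.1).card * (fib p.2).card ≤ 2 * 2 := Nat.mul_le_mul h1 h2
        _ = 4 := by norm_num
      have h5 : (2 : ℕ) ^ ((fib p.1).card * (fib p.2).card) ≤ 2 ^ 4 :=
        Nat.pow_le_pow_right (by norm_num) h4
      have h6 : (2 : ℕ) ^ 4 = 16 := by norm_num
      simp only [pow_one]
      omega
  calc (Finset.univ.filter fun A : Fin n → Fin n → Bool => ctr ε (m := m) A = B).card
      ≤ (ones.pi (fun p => cand p)).card := hinj
    _ = ∏ p ∈ ones, (cand p).card := Finset.card_pi _ _
    _ ≤ ∏ p ∈ ones, 15 ^ (if ε = 1 ∧ (p.1 : ℕ) = 0 ∧ (p.2 : ℕ) = 0 then 0 else 1) :=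
        Finset.prod_le_prod' hper
    _ = 15 ^ (∑ p ∈ ones, (if ε = 1 ∧ (p.1 : ℕ) = 0 ∧ (p.2 : ℕ) = 0 then 0 else 1)) :=
        Finset.prod_pow_eq_pow_sum _ _ _
    _ = 15 ^ mass (maskB ε B) := by rw [mask_mass]
-- chunk 7: assembly
open Classical in
lemma TP_eq {k n : ℕ} (π : Equiv.Perm (Fin k)) :
    TP n π = (Finset.univ.filter fun A : Fin n → Fin n → Bool => AvoidsPerm A π).card := by
  rw [TP, Nat.card_eq_fintype_card]
  exact Fintype.card_subtype _

lemma exP_step {k n m ε : ℕ} {π : Equiv.Perm (Fin k)} (hπ : SumInd π) (hk : 0 < k)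
    (hε : ε ≤ 1) (hm : 0 < m) (hn : m + m = n + ε)
    {B : Fin m → Fin m → Bool} (hB : AvoidsPerm B π) :
    exP m π + mass (maskB ε B) ≤ exP n π := by
  obtain ⟨A, hA, hmA⟩ := exP_exists m π hk
  have hBo : AvoidsPerm (maskB ε B) π := avoids_mono (maskB_le B) hB
  have hcorner : ε = 1 → maskB ε B ⟨0, hm⟩ ⟨0, hm⟩ = false := fun h => maskB_corner hm B h
  have hg : AvoidsPerm (glueM (n := n) ε A (maskB ε B)) π :=
    glue_avoids hπ hε hm hn hA hBo hcorner
  have hle := le_exP hg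
  rw [glue_mass hε hm hn A (maskB ε B) hcorner, hmA] at hle
  exact hle

open Classical Finset in
lemma TP_step {k n m ε : ℕ} {π : Equiv.Perm (Fin k)} (hπ : SumInd π) (hk : 0 < k)
    (hε : ε ≤ 1) (hm : 0 < m) (hn : m + m = n + ε) :
    TP n π ≤ TP m π * 15 ^ (exP n π - exP m π) := by
  rw [TP_eq, TP_eq]
  have hmaps : ∀ A ∈ (univ.filter fun A : Fin n → Fin n → Bool => AvoidsPerm A π),
      ctr ε (m := m) A ∈ (univ.filter fun B : Fin m → Fin m → Bool => AvoidsPerm B π) := by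
    intro A hA
    simp only [mem_filter, mem_univ, true_and] at hA ⊢
    exact ctr_avoids hA
  rw [Finset.card_eq_sum_card_fiberwise hmaps]
  have hbound : ∀ B ∈ (univ.filter fun B : Fin m → Fin m → Bool => AvoidsPerm B π),
      ((univ.filter fun A : Fin n → Fin n → Bool => AvoidsPerm A π).filter
        (fun A => ctr ε (m := m) A = B)).card ≤ 15 ^ (exP n π - exP m π) := by
    intro B hB
    simp only [mem_filter, mem_univ, true_and] at hB
    have h1 : ((univ.filter fun A : Fin n → Fin n → Bool => AvoidsPerm A π).filter
        (fun A => ctr ε (m := m) A = B)).card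
        ≤ (univ.filter fun A : Fin n → Fin n → Bool => ctr ε (m := m) A = B).card := by
      apply card_le_card
      intro A hA
      simp only [mem_filter, mem_univ, true_and] at hA ⊢
      exact hA.2
    have h2 := fiber_card_le hε hm hn B
    have h3 := exP_step hπ hk hε hm hn hB
    have h4 : mass (maskB ε B) ≤ exP n π - exP m π := by omega
    calc ((univ.filter fun A : Fin n → Fin n → Bool => AvoidsPerm A π).filter
        (fun A => ctr ε (m := m) A = B)).card
        ≤ 15 ^ mass (maskB ε B) := le_trans h1 h2
      _ ≤ 15 ^ (exP n π - exP m π) := Nat.pow_le_pow_right (by norm_num) h4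
  calc ∑ B ∈ (univ.filter fun B : Fin m → Fin m → Bool => AvoidsPerm B π),
        ((univ.filter fun A : Fin n → Fin n → Bool => AvoidsPerm A π).filter
          (fun A => ctr ε (m := m) A = B)).card
      ≤ ∑ _B ∈ (univ.filter fun B : Fin m → Fin m → Bool => AvoidsPerm B π),
          15 ^ (exP n π - exP m π) := Finset.sum_le_sum hbound
    _ = (univ.filter fun B : Fin m → Fin m → Bool => AvoidsPerm B π).card
          * 15 ^ (exP n π - exP m π) := by rw [Finset.sum_const, smul_eq_mul]

lemma avoid_one_all {k : ℕ} (hk : 2 ≤ k) (π : Equiv.Perm (Fin k)) (A : Fin 1 → Fin 1 → Bool) :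
    AvoidsPerm A π := by
  rintro ⟨r, c, hr, -, -⟩
  have h01 : (⟨0, by omega⟩ : Fin k) < ⟨1, by omega⟩ := by
    rw [Fin.lt_def]; norm_num
  have h2 := hr h01
  rw [Fin.lt_def] at h2
  have h3 := (r ⟨0, by omega⟩).isLt
  have h4 := (r ⟨1, by omega⟩).isLt
  omega

open Classical Finset in
lemma TP_one {k : ℕ} (π : Equiv.Perm (Fin k)) : TP 1 π ≤ 2 := by
  rw [TP_eq]
  calc (univ.filter fun A : Fin 1 → Fin 1 → Bool => AvoidsPerm A π).card
      ≤ (univ : Finset (Fin 1 → Fin 1 → Bool)).card := card_filter_le _ _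
    _ = 2 := by simp [card_univ]

lemma ex_one {k : ℕ} (hk : 2 ≤ k) (π : Equiv.Perm (Fin k)) : 1 ≤ exP 1 π := by
  have hA : AvoidsPerm (fun _ _ => true : Fin 1 → Fin 1 → Bool) π := avoid_one_all hk π _
  have h1 := le_exP hA
  have h2 : mass (fun _ _ => true : Fin 1 → Fin 1 → Bool) = 1 := by
    rw [mass]
    simp
  omega

lemma main_sum {k : ℕ} {π : Equiv.Perm (Fin k)} (hπ : SumInd π) (hk : 2 ≤ k) :
    ∀ n, 0 < n → TP n π ≤ 15 ^ exP n π := by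
  intro n
  induction n using Nat.strong_induction_on with
  | _ n IH =>
    intro hn
    rcases eq_or_lt_of_le (show 1 ≤ n from hn) with h1 | h2
    · rw [← h1]
      have hT := TP_one (k := k) π
      have hE := ex_one hk π
      calc TP 1 π ≤ 2 := hT
        _ ≤ 15 ^ 1 := by norm_num
        _ ≤ 15 ^ exP 1 π := Nat.pow_le_pow_right (by norm_num) hE
    · set m := (n + 1) / 2 with hmdef
      set ε := m + m - n with hεdef
      have hε1 : ε ≤ 1 := by omega
      have hm0 : 0 < m := by omega
      have hmn : m + m = n + ε := by omega
      have hmlt : m < n := by omega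
      have IHm := IH m hmlt (by omega)
      have hstep := TP_step hπ (by omega) hε1 hm0 hmn
      have hexle : exP m π ≤ exP n π := by
        have h3 := exP_step (B := (fun _ _ => false : Fin m → Fin m → Bool)) hπ (by omega)
          hε1 hm0 hmn (zero_avoids π (by omega))
        omega
      calc TP n π ≤ TP m π * 15 ^ (exP n π - exP m π) := hstep
        _ ≤ 15 ^ exP m π * 15 ^ (exP n π - exP m π) := Nat.mul_le_mul_right _ IHm
        _ = 15 ^ (exP m π + (exP n π - exP m π)) := (pow_add 15 _ _).symm
        _ = 15 ^ exP n π := by rw [Nat.add_sub_cancel' hexle]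
-- chunk 8: final theorem
open Classical Finset in
theorem stmt12' {k : ℕ} (π : Equiv.Perm (Fin k)) (n : ℕ) (hn : 0 < n) :
    TP n π ≤ 15 ^ exP n π := by
  rcases Nat.eq_zero_or_pos k with hk0 | hkpos
  · subst hk0
    have hempty : IsEmpty {A : Fin n → Fin n → Bool // AvoidsPerm A π} := by
      constructor
      rintro ⟨A, hA⟩
      refine hA ⟨fun i => i.elim0, fun i => i.elim0, ?_, ?_, ?_⟩
      · intro a b h; exact a.elim0
      · intro a b h; exact a.elim0
      · intro i; exact i.elim0
    rw [TP, Nat.card_of_isEmpty]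
    exact Nat.zero_le _
  rcases eq_or_lt_of_le (show 1 ≤ k from hkpos) with hk1 | hk2
  · -- k = 1
    subst hk1
    have hTP : TP n π ≤ 1 := by
      rw [TP_eq]
      rw [Finset.card_le_one]
      intro A hA B hB
      simp only [Finset.mem_filter, Finset.mem_univ, true_and] at hA hB
      have hzero : ∀ X : Fin n → Fin n → Bool, AvoidsPerm X π → X = fun _ _ => false := by
        intro X hX
        funext i j
        by_contra hT
        have hT' : X i j = true := by
          cases h : X i j
          · exact absurd h hT
          · rfl
        apply hX
        refine ⟨fun _ => i, fun _ => j, ?_, ?_, ?_⟩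
        · intro a b hab
          exfalso
          rw [Fin.lt_def] at hab
          have := a.isLt
          have := b.isLt
          omega
        · intro a b hab
          exfalso
          rw [Fin.lt_def] at hab
          have := a.isLt
          have := b.isLt
          omega
        · intro p q _
          exact hT'
      rw [hzero A hA, hzero B hB]
    exact le_trans hTP (Nat.one_le_pow _ _ (by norm_num))
  · -- 2 ≤ k
    rcases sumInd_or π (by omega) with h | h
    · exact main_sum h hk2 n hn
    · have e1 := TP_flip (n := n) π
      have e2 := exP_flip (n := n) π
      rw [← e1, ← e2]
      exact main_sum h hk2 n hn

/-- For every permutation `π` and every positive integer `n`,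
`T_n(π) ≤ 15^{ex(n,π)}`. -/
theorem stmt12 {k : ℕ} (π : Equiv.Perm (Fin k)) (n : ℕ) (hn : 0 < n) :
    TP n π ≤ 15 ^ exP n π := by
  exact stmt12' π n hn
end

section
/- For every permutation π and all positive integers n and t, setting N = tn, we have S_N(π) ≤ T_n(π)·t^{2N}. -/
open Filter

-- auxiliary
variable {n t : ℕ}

def blkA (n t : ℕ) (ht : 0 < t) (x : Fin (t * n)) : Fin n :=
  ⟨x / t, by
    have hx := x.isLt
    exact (Nat.div_lt_iff_lt_mul ht).mpr (lt_of_lt_of_le hx (le_of_eq (Nat.mul_comm t n)))⟩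

def offA (n t : ℕ) (ht : 0 < t) (x : Fin (t * n)) : Fin t :=
  ⟨x % t, Nat.mod_lt _ ht⟩

lemma blkA_lt (ht : 0 < t) {x y : Fin (t * n)} (h : blkA n t ht x < blkA n t ht y) : x < y := by
  by_contra hle
  push_neg at hle
  have h2 : (y : ℕ) / t ≤ (x : ℕ) / t := Nat.div_le_div_right hle
  simp only [blkA, Fin.lt_def] at h
  omega

lemma blk_off_eq (ht : 0 < t) {x y : Fin (t * n)} (hb : blkA n t ht x = blkA n t ht y)
    (ho : offA n t ht x = offA n t ht y) : x = y := by
  apply Fin.ext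
  have h1 : (x : ℕ) / t = (y : ℕ) / t := by
    have := congrArg Fin.val hb
    simpa [blkA] using this
  have h2 : (x : ℕ) % t = (y : ℕ) % t := by
    have := congrArg Fin.val ho
    simpa [offA] using this
  calc (x : ℕ) = t * ((x : ℕ) / t) + (x : ℕ) % t := (Nat.div_add_mod _ t).symm
    _ = t * ((y : ℕ) / t) + (y : ℕ) % t := by rw [h1, h2]
    _ = y := Nat.div_add_mod _ t

def Bmat (n t : ℕ) (ht : 0 < t) (σ : Equiv.Perm (Fin (t * n))) : Fin n → Fin n → Bool :=
  fun i j => decide (∃ x, blkA n t ht x = i ∧ blkA n t ht (σ x) = j)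

lemma Bmat_avoids {k : ℕ} (π : Equiv.Perm (Fin k)) (ht : 0 < t)
    (σ : Equiv.Perm (Fin (t * n))) (hσ : ¬ PermContains σ π) :
    AvoidsPerm (Bmat n t ht σ) π := by
  intro hcon
  apply hσ
  obtain ⟨r, c, hr, hc, hP⟩ := hcon
  have key : ∀ i : Fin k, ∃ x : Fin (t * n),
      blkA n t ht x = r i ∧ blkA n t ht (σ x) = c (π i) := by
    intro i
    have := hP i (π i) (by simp [permMatrix])
    simpa [Bmat] using this
  choose x hx1 hx2 using key
  have hmono : StrictMono x := by
    intro i j hij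
    apply blkA_lt ht
    rw [hx1 i, hx1 j]
    exact hr hij
  refine ⟨x, hmono, fun i j => ?_⟩
  constructor
  · intro h
    rcases lt_trichotomy (π i) (π j) with h' | h' | h'
    · exact h'
    · exact absurd (congrArg σ (congrArg x (π.injective h'))) (by
        intro he; exact absurd (he ▸ h) (lt_irrefl _))
    · exfalso
      have : σ (x j) < σ (x i) := by
        apply blkA_lt ht
        rw [hx2 i, hx2 j]
        exact hc h'
      exact absurd h (not_lt.mpr this.le)
  · intro h
    apply blkA_lt ht
    rw [hx2 i, hx2 j]
    exact hc h

def hitSet (n t : ℕ) (ht : 0 < t) (σ : Equiv.Perm (Fin (t * n))) (i : Fin n) : Finset (Fin n) :=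
  Finset.univ.filter fun j => Bmat n t ht σ i j = true

lemma mem_hitSet (ht : 0 < t) (σ : Equiv.Perm (Fin (t * n))) (x : Fin (t * n)) :
    blkA n t ht (σ x) ∈ hitSet n t ht σ (blkA n t ht x) := by
  simp only [hitSet, Finset.mem_filter, Finset.mem_univ, true_and, Bmat, decide_eq_true_eq]
  exact ⟨x, rfl, rfl⟩

lemma hitSet_card (ht : 0 < t) (σ : Equiv.Perm (Fin (t * n))) (i : Fin n) :
    (hitSet n t ht σ i).card ≤ t := by
  have hsub : hitSet n t ht σ i ⊆
      (Finset.univ.filter fun x : Fin (t * n) => blkA n t ht x = i).image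
        (fun x => blkA n t ht (σ x)) := by
    intro j hj
    simp only [hitSet, Finset.mem_filter, Finset.mem_univ, true_and, Bmat,
      decide_eq_true_eq] at hj
    obtain ⟨x, hx1, hx2⟩ := hj
    exact Finset.mem_image.mpr ⟨x, by simp [hx1], hx2⟩
  calc (hitSet n t ht σ i).card ≤ _ := Finset.card_le_card hsub
    _ ≤ (Finset.univ.filter fun x : Fin (t * n) => blkA n t ht x = i).card :=
        Finset.card_image_le
    _ ≤ (Finset.univ : Finset (Fin t)).card := by
        apply Finset.card_le_card_of_injOn (offA n t ht)
        · intro a _; exact Finset.mem_univ _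
        · intro a ha b hb hab
          simp only [Finset.coe_filter, Set.mem_setOf_eq, Finset.mem_univ, true_and] at ha hb
          exact blk_off_eq ht (ha.trans hb.symm) hab
    _ = t := by simp

def rankA (n t : ℕ) (ht : 0 < t) (σ : Equiv.Perm (Fin (t * n))) (x : Fin (t * n)) : ℕ :=
  ((hitSet n t ht σ (blkA n t ht x)).filter fun j => j < blkA n t ht (σ x)).card

lemma rankA_lt (ht : 0 < t) (σ : Equiv.Perm (Fin (t * n))) (x : Fin (t * n)) :
    rankA n t ht σ x < t := by
  have hmem := mem_hitSet ht σ x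
  have hlt : ((hitSet n t ht σ (blkA n t ht x)).filter fun j => j < blkA n t ht (σ x)).card <
      (hitSet n t ht σ (blkA n t ht x)).card := by
    apply Finset.card_lt_card
    constructor
    · exact Finset.filter_subset _ _
    · intro hss
      have := hss hmem
      simp at this
  exact lt_of_lt_of_le hlt (hitSet_card ht σ _)

lemma rank_inj {m : ℕ} (S : Finset (Fin m)) {a b : Fin m} (ha : a ∈ S) (hb : b ∈ S)
    (h : (S.filter fun j => j < a).card = (S.filter fun j => j < b).card) : a = b := by
  rcases lt_trichotomy a b with h' | h' | h'
  · exfalso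
    have : (S.filter fun j => j < a).card < (S.filter fun j => j < b).card := by
      apply Finset.card_lt_card
      constructor
      · intro j hj
        simp only [Finset.mem_filter] at hj ⊢
        exact ⟨hj.1, hj.2.trans h'⟩
      · intro hss
        have := Finset.mem_filter.mp (hss (Finset.mem_filter.mpr ⟨ha, h'⟩))
        exact absurd this.2 (lt_irrefl a)
    omega
  · exact h'
  · exfalso
    have : (S.filter fun j => j < b).card < (S.filter fun j => j < a).card := by
      apply Finset.card_lt_card
      constructor
      · intro j hj
        simp only [Finset.mem_filter] at hj ⊢
        exact ⟨hj.1, hj.2.trans h'⟩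
      · intro hss
        have := Finset.mem_filter.mp (hss (Finset.mem_filter.mpr ⟨hb, h'⟩))
        exact absurd this.2 (lt_irrefl b)
    omega


/-- For every permutation `π` and all positive integers `n` and
`t`, setting `N = tn`, we have `S_N(π) ≤ T_n(π)·t^{2N}`. -/
theorem stmt13 {k : ℕ} (π : Equiv.Perm (Fin k)) (n t : ℕ) (hn : 0 < n) (ht : 0 < t) :
    SP (t * n) π ≤ TP n π * t ^ (2 * (t * n)) := by
  classical
  set F : {σ : Equiv.Perm (Fin (t * n)) // ¬ PermContains σ π} →
      ({A : Fin n → Fin n → Bool // AvoidsPerm A π} ×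
        ((Fin (t * n) → Fin t) × (Fin (t * n) → Fin t))) :=
    fun σ => (⟨Bmat n t ht σ.1, Bmat_avoids π ht σ.1 σ.2⟩,
      fun x => offA n t ht (σ.1 x),
      fun x => ⟨rankA n t ht σ.1 x, rankA_lt ht σ.1 x⟩) with hF
  have hinj : Function.Injective F := by
    intro σ σ' hEq
    have hB : Bmat n t ht σ.1 = Bmat n t ht σ'.1 :=
      congrArg (fun p => p.1.1) hEq
    have hoff : ∀ x, offA n t ht (σ.1 x) = offA n t ht (σ'.1 x) :=
      fun x => congrFun (congrArg (fun p => p.2.1) hEq) x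
    have hrank : ∀ x, rankA n t ht σ.1 x = rankA n t ht σ'.1 x :=
      fun x => congrArg Fin.val (congrFun (congrArg (fun p => p.2.2) hEq) x)
    have hhit : ∀ i, hitSet n t ht σ.1 i = hitSet n t ht σ'.1 i := by
      intro i; unfold hitSet; rw [hB]
    apply Subtype.ext
    apply Equiv.ext
    intro x
    have ha : blkA n t ht (σ.1 x) ∈ hitSet n t ht σ.1 (blkA n t ht x) := mem_hitSet ht σ.1 x
    have hb : blkA n t ht (σ'.1 x) ∈ hitSet n t ht σ.1 (blkA n t ht x) := by
      rw [hhit]; exact mem_hitSet ht σ'.1 x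
    have hblk : blkA n t ht (σ.1 x) = blkA n t ht (σ'.1 x) := by
      apply rank_inj _ ha hb
      have := hrank x
      unfold rankA at this
      rw [hhit] at this ⊢
      exact this
    exact blk_off_eq ht hblk (hoff x)
  have h1 : SP (t * n) π ≤ Nat.card ({A : Fin n → Fin n → Bool // AvoidsPerm A π} ×
      ((Fin (t * n) → Fin t) × (Fin (t * n) → Fin t))) :=
    Nat.card_le_card_of_injective F hinj
  rw [Nat.card_prod, Nat.card_prod] at h1
  have h2 : Nat.card (Fin (t * n) → Fin t) = t ^ (t * n) := by
    simp [Nat.card_fun]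
  rw [h2] at h1
  calc SP (t * n) π ≤ TP n π * (t ^ (t * n) * t ^ (t * n)) := h1
    _ = TP n π * t ^ (2 * (t * n)) := by rw [← pow_add, two_mul]
end

section
/- There is an absolute constant C > 0 with the following property: for every permutation π and every real number c ≥ 1 such that ex(m,π) ≤ c·m for all positive integers m, we have limsup_{n→∞} S_n(π)^{1/n} ≤ C·c². -/
open Filter

open Topology

section Aux

open Finset

variable {k : ℕ} (π : Equiv.Perm (Fin k))

/-- Contraction of a matrix along monotone index maps. -/
def contr {m m' M M' : ℕ} (f : Fin m → Fin M) (g : Fin m' → Fin M')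
    (A : Fin m → Fin m' → Bool) : Fin M → Fin M' → Bool :=
  fun i j => decide (∃ x y, f x = i ∧ g y = j ∧ A x y = true)

lemma contr_avoids {m m' M M' : ℕ} {f : Fin m → Fin M} {g : Fin m' → Fin M'}
    (hf : Monotone f) (hg : Monotone g) {A : Fin m → Fin m' → Bool}
    (hA : AvoidsPerm A π) : AvoidsPerm (contr f g A) π := by
  rintro ⟨r, c, hr, hc, h⟩
  have key : ∀ i : Fin k, ∃ x y, f x = r i ∧ g y = c (π i) ∧ A x y = true := by
    intro i
    have := h i (π i) (by simp [permMatrix])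
    simpa [contr] using this
  choose x y hx hy hxy using key
  apply hA
  refine ⟨x, fun j => y (π.symm j), ?_, ?_, ?_⟩
  · intro i i' hii
    have : f (x i) < f (x i') := by rw [hx, hx]; exact hr hii
    by_contra hle
    exact absurd (hf (not_lt.mp hle)) (not_le.mpr this)
  · intro j j' hjj
    have : g (y (π.symm j)) < g (y (π.symm j')) := by
      rw [hy, hy]
      simp only [Equiv.apply_symm_apply]
      exact hc hjj
    by_contra hle
    exact absurd (hg (not_lt.mp hle)) (not_le.mpr this)
  · intro i j hij
    have hj : π i = j := by simpa [permMatrix] using hij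
    subst hj
    show A (x i) (y (π.symm (π i))) = true
    rw [Equiv.symm_apply_apply]
    exact hxy i

lemma permMatrix_avoids {n : ℕ} {σ : Equiv.Perm (Fin n)}
    (h : ¬ PermContains σ π) : AvoidsPerm (permMatrix σ) π := by
  rintro ⟨r, c, hr, hc, hmem⟩
  apply h
  have key : ∀ i, σ (r i) = c (π i) := by
    intro i
    have := hmem i (π i) (by simp [permMatrix])
    simpa [permMatrix] using this
  exact ⟨r, hr, fun i j => by rw [key, key]; exact ⟨fun hh => by
    by_contra hle
    exact absurd (hc.le_iff_le.mpr (not_lt.mp hle)) (not_le.mpr hh),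
    fun hh => hc hh⟩⟩

def pad {N N' : ℕ} (A : Fin N → Fin N → Bool) : Fin N' → Fin N' → Bool := fun x y =>
  if hx : (x : ℕ) < N ∧ (y : ℕ) < N then A ⟨x, hx.1⟩ ⟨y, hx.2⟩ else false

lemma TP_mono {N N' : ℕ} (h : N ≤ N') : TP N π ≤ TP N' π := by
  classical
  have hav : ∀ A : Fin N → Fin N → Bool, AvoidsPerm A π → AvoidsPerm (pad (N' := N') A) π := by
    rintro A hA ⟨r, c, hr, hc, hmem⟩
    have key : ∀ i, pad A (r i) (c (π i)) = true := fun i =>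
      hmem i (π i) (by simp [permMatrix])
    have hbnd : ∀ i, ((r i : ℕ) < N ∧ ((c (π i)) : ℕ) < N) := by
      intro i
      by_contra hcon
      have := key i
      simp only [pad, dif_neg hcon] at this
      exact Bool.false_ne_true this
    have hcb : ∀ j, ((c j : ℕ) < N) := by
      intro j
      have := (hbnd (π.symm j)).2
      rwa [Equiv.apply_symm_apply] at this
    apply hA
    refine ⟨fun i => ⟨r i, (hbnd i).1⟩, fun j => ⟨c j, hcb j⟩, ?_, ?_, ?_⟩
    · intro i i' hii
      exact hr hii
    · intro j j' hjj
      exact hc hjj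
    · intro i j hij
      have hj : π i = j := by simpa [permMatrix] using hij
      subst hj
      have := key i
      simpa [pad, dif_pos (hbnd i)] using this
  have hinj : Function.Injective
      (fun A : {A : Fin N → Fin N → Bool // AvoidsPerm A π} =>
        (⟨pad A.1, hav A.1 A.2⟩ : {A : Fin N' → Fin N' → Bool // AvoidsPerm A π})) := by
    rintro ⟨A, hA⟩ ⟨B, hB⟩ hAB
    simp only [Subtype.mk.injEq] at hAB ⊢
    funext x y
    have := congrFun (congrFun hAB ⟨x, lt_of_lt_of_le x.2 h⟩) ⟨y, lt_of_lt_of_le y.2 h⟩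
    simpa [pad, x.2, y.2] using this
  exact Nat.card_le_card_of_injective _ hinj

lemma mass_le_exP {M : ℕ} {B : Fin M → Fin M → Bool} (hB : AvoidsPerm B π) :
    mass B ≤ exP M π := by
  apply le_csSup
  · refine ⟨M * M, ?_⟩
    rintro m ⟨A, -, rfl⟩
    calc mass A ≤ (Finset.univ : Finset (Fin M × Fin M)).card := Finset.card_filter_le _ _
    _ = M * M := by simp
  · exact ⟨B, hB, rfl⟩

/-- the dyadic contraction map -/
def half {M : ℕ} (x : Fin (2 * M)) : Fin M := ⟨(x : ℕ) / 2, by omega⟩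

lemma half_monotone {M : ℕ} : Monotone (half (M := M)) := by
  intro x y hxy
  exact Nat.div_le_div_right (c := 2) hxy

/-- block coordinate: row `2*i+u` -/
def blk {M : ℕ} (i : Fin M) (u : Fin 2) : Fin (2 * M) := ⟨2 * (i : ℕ) + (u : ℕ), by omega⟩

lemma klazar_step (M : ℕ) : TP (2 * M) π ≤ TP M π * 16 ^ (exP M π) := by
  classical
  set s₂ : Finset (Fin (2*M) → Fin (2*M) → Bool) :=
    Finset.univ.filter (fun A => AvoidsPerm A π) with hs₂
  set s₁ : Finset (Fin M → Fin M → Bool) :=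
    Finset.univ.filter (fun A => AvoidsPerm A π) with hs₁
  have hT2 : TP (2*M) π = s₂.card := by
    rw [TP, Nat.card_eq_fintype_card, Fintype.card_subtype]
  have hT1 : TP M π = s₁.card := by
    rw [TP, Nat.card_eq_fintype_card, Fintype.card_subtype]
  set Φ : (Fin (2*M) → Fin (2*M) → Bool) → (Fin M → Fin M → Bool) :=
    fun A => contr half half A with hΦ
  have himg : s₂.image Φ ⊆ s₁ := by
    intro B hB
    simp only [hs₂, hs₁, Finset.mem_image, Finset.mem_filter, Finset.mem_univ, true_and] at hB ⊢
    obtain ⟨A, hA, rfl⟩ := hB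
    exact contr_avoids π half_monotone half_monotone hA
  have hfib : ∀ B ∈ s₂.image Φ, (s₂.filter fun A => Φ A = B).card ≤ 16 ^ (exP M π) := by
    intro B hB
    have hBav : AvoidsPerm B π := by
      have := himg hB
      simpa [hs₁] using this
    have hmB : mass B ≤ exP M π := mass_le_exP π hBav
    set ones : Finset (Fin M × Fin M) :=
      Finset.univ.filter (fun p : Fin M × Fin M => B p.1 p.2 = true) with hones
    have hmass : mass B = ones.card := rfl
    -- injection from fiber into functions ones → (Fin 2 → Fin 2 → Bool)
    have hinj : ∀ A ∈ s₂.filter (fun A => Φ A = B), ∀ A' ∈ s₂.filter (fun A => Φ A = B),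
        (fun (p : ones) (u v : Fin 2) => A (blk p.1.1 u) (blk p.1.2 v)) =
        (fun (p : ones) (u v : Fin 2) => A' (blk p.1.1 u) (blk p.1.2 v)) → A = A' := by
      intro A hA A' hA' heq
      simp only [Finset.mem_filter] at hA hA'
      funext x y
      by_cases hb : B (half x) (half y) = true
      · have hp : (⟨(half x, half y), by simp [hones, hb]⟩ : ones) ∈ (Finset.univ : Finset ones) :=
          Finset.mem_univ _
        have := congrFun (congrFun (congrFun heq ⟨(half x, half y), by simp [hones, hb]⟩)
          ⟨(x : ℕ) % 2, Nat.mod_lt _ (by norm_num)⟩) ⟨(y : ℕ) % 2, Nat.mod_lt _ (by norm_num)⟩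
        have hx : blk (half x) ⟨(x : ℕ) % 2, Nat.mod_lt _ (by norm_num)⟩ = x := by
          apply Fin.ext; simp [blk, half]; omega
        have hy : blk (half y) ⟨(y : ℕ) % 2, Nat.mod_lt _ (by norm_num)⟩ = y := by
          apply Fin.ext; simp [blk, half]; omega
        rwa [hx, hy] at this
      · have hzero : ∀ (A₀ : Fin (2*M) → Fin (2*M) → Bool), Φ A₀ = B → A₀ x y = false := by
          intro A₀ hA₀
          by_contra hcon
          have htrue : A₀ x y = true := by
            cases hxy : A₀ x y
            · exact absurd hxy hcon
            · rfl
          apply hb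
          rw [← hA₀]
          simp only [hΦ, contr, decide_eq_true_eq]
          exact ⟨x, y, rfl, rfl, htrue⟩
        rw [hzero A hA.2, hzero A' hA'.2]
    calc (s₂.filter fun A => Φ A = B).card
        ≤ (Finset.univ : Finset (ones → Fin 2 → Fin 2 → Bool)).card := by
          apply Finset.card_le_card_of_injOn
            (fun A (p : ones) (u v : Fin 2) => A (blk p.1.1 u) (blk p.1.2 v))
          · intro a _; exact Finset.mem_univ _
          · intro A hA A' hA' h; exact hinj A hA A' hA' h
      _ = 16 ^ ones.card := by
          rw [Finset.card_univ]
          rw [Fintype.card_fun]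
          congr 1
          · simp
      _ ≤ 16 ^ (exP M π) := Nat.pow_le_pow_right (by norm_num) (hmass ▸ hmB)
  calc TP (2*M) π = s₂.card := hT2
    _ ≤ 16 ^ (exP M π) * (s₂.image Φ).card := Finset.card_le_mul_card_image s₂ _ hfib
    _ ≤ 16 ^ (exP M π) * s₁.card := by
        exact Nat.mul_le_mul_left _ (Finset.card_le_card himg)
    _ = TP M π * 16 ^ (exP M π) := by rw [hT1, Nat.mul_comm]
lemma TP_le_pow (N : ℕ) : TP N π ≤ 2 ^ (N * N) := by
  have h1 : TP N π ≤ Nat.card (Fin N → Fin N → Bool) :=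
    Nat.card_le_card_of_injective _ Subtype.val_injective
  have h2 : Nat.card (Fin N → Fin N → Bool) = 2 ^ (N * N) := by
    rw [Nat.card_eq_fintype_card, Fintype.card_fun, Fintype.card_fun]
    simp [← pow_mul, Nat.mul_comm]
  omega

lemma T_bound (c : ℝ) (hc : 1 ≤ c) (hex : ∀ m : ℕ, 0 < m → (exP m π : ℝ) ≤ c * m) :
    ∀ N : ℕ, (TP N π : ℝ) ≤ 2 * (16 : ℝ) ^ (2 * c * N) := by
  intro N
  induction N using Nat.strong_induction_on with
  | _ N ih =>
    have hrpow1 : (1 : ℝ) ≤ (16 : ℝ) ^ (2 * c * N) := by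
      rw [show (1 : ℝ) = (16 : ℝ) ^ (0 : ℝ) by rw [Real.rpow_zero]]
      apply Real.rpow_le_rpow_of_exponent_le (by norm_num)
      positivity
    by_cases hN : N ≤ 1
    · have h1 : TP N π ≤ 2 := by
        have := TP_le_pow π N
        interval_cases N <;> simp at this <;> omega
      calc (TP N π : ℝ) ≤ 2 := by exact_mod_cast h1
        _ ≤ 2 * (16 : ℝ) ^ (2 * c * N) := by nlinarith
    · push_neg at hN
      set M : ℕ := (N + 1) / 2 with hM
      have hMN : N ≤ 2 * M := by omega
      have hMlt : M < N := by omega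
      have h3M : 3 * M ≤ 2 * N := by omega
      have hMpos : 0 < M := by omega
      have step1 : (TP N π : ℝ) ≤ (TP (2 * M) π : ℝ) :=
        Nat.cast_le.mpr (TP_mono π hMN)
      have step2 : (TP (2 * M) π : ℝ) ≤ (TP M π : ℝ) * (16 : ℝ) ^ ((exP M π : ℕ) : ℝ) := by
        have := klazar_step π M
        have hcast : ((TP M π * 16 ^ exP M π : ℕ) : ℝ)
            = (TP M π : ℝ) * (16 : ℝ) ^ ((exP M π : ℕ) : ℝ) := by
          push_cast
          rw [Real.rpow_natCast]
        calc (TP (2 * M) π : ℝ) ≤ ((TP M π * 16 ^ exP M π : ℕ) : ℝ) := Nat.cast_le.mpr this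
          _ = _ := hcast
      have step3 : (16 : ℝ) ^ ((exP M π : ℕ) : ℝ) ≤ (16 : ℝ) ^ (c * M) :=
        Real.rpow_le_rpow_of_exponent_le (by norm_num) (hex M hMpos)
      have step4 : (TP M π : ℝ) ≤ 2 * (16 : ℝ) ^ (2 * c * M) := ih M hMlt
      have hTM0 : (0 : ℝ) ≤ (TP M π : ℝ) := Nat.cast_nonneg _
      have hpow0 : (0 : ℝ) ≤ (16 : ℝ) ^ ((exP M π : ℕ) : ℝ) := Real.rpow_nonneg (by norm_num) _
      calc (TP N π : ℝ) ≤ (TP M π : ℝ) * (16 : ℝ) ^ ((exP M π : ℕ) : ℝ) :=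
            le_trans step1 step2
        _ ≤ (2 * (16 : ℝ) ^ (2 * c * M)) * (16 : ℝ) ^ (c * M) := by
            apply mul_le_mul step4 step3 hpow0
            positivity
        _ = 2 * (16 : ℝ) ^ (2 * c * M + c * M) := by
            rw [Real.rpow_add (by norm_num)]
            ring
        _ ≤ 2 * (16 : ℝ) ^ (2 * c * N) := by
            have hle : 2 * c * M + c * M ≤ 2 * c * N := by
              have : (3 * M : ℝ) ≤ 2 * N := by exact_mod_cast h3M
              nlinarith
            have := Real.rpow_le_rpow_of_exponent_le (x := (16:ℝ)) (by norm_num) hle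
            nlinarith [Real.rpow_nonneg (show (0:ℝ) ≤ 16 by norm_num) (2 * c * M + c * M)]
/-- coarse contraction map with block size `t` -/
def dv (n t : ℕ) (x : Fin n) : Fin (n / t + 1) :=
  ⟨(x : ℕ) / t, Nat.lt_succ_of_le (Nat.div_le_div_right (le_of_lt x.2))⟩

lemma dv_mono {n t : ℕ} : Monotone (dv n t) := by
  intro x y hxy
  exact Nat.div_le_div_right (c := t) hxy

lemma filter_lt_card_inj {α : Type*} [LinearOrder α] [DecidableEq α] (S : Finset α) {a b : α}
    (ha : a ∈ S) (hb : b ∈ S)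
    (h : (S.filter (fun j => j < a)).card = (S.filter (fun j => j < b)).card) : a = b := by
  rcases lt_trichotomy a b with hab | hab | hab
  · exfalso
    have hss : S.filter (fun j => j < a) ⊂ S.filter (fun j => j < b) := by
      constructor
      · intro j hj
        simp only [Finset.mem_filter] at hj ⊢
        exact ⟨hj.1, lt_trans hj.2 hab⟩
      · intro hsub
        have : a ∈ S.filter (fun j => j < a) := hsub (by simp [Finset.mem_filter, ha, hab])
        simp [Finset.mem_filter] at this
    exact absurd h (Nat.ne_of_lt (Finset.card_lt_card hss))
  · exact hab
  · exfalso
    have hss : S.filter (fun j => j < b) ⊂ S.filter (fun j => j < a) := by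
      constructor
      · intro j hj
        simp only [Finset.mem_filter] at hj ⊢
        exact ⟨hj.1, lt_trans hj.2 hab⟩
      · intro hsub
        have : b ∈ S.filter (fun j => j < b) := hsub (by simp [Finset.mem_filter, hb, hab])
        simp [Finset.mem_filter] at this
    exact absurd h.symm (Nat.ne_of_lt (Finset.card_lt_card hss))

/-- the set of nonempty block-columns in block-row of `x` -/
def rowsetF (n t : ℕ) (σ : Equiv.Perm (Fin n)) (x : Fin n) : Finset (Fin (n / t + 1)) :=
  Finset.univ.filter fun j => contr (dv n t) (dv n t) (permMatrix σ) (dv n t x) j = true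

lemma mem_rowsetF {n t : ℕ} {σ : Equiv.Perm (Fin n)} {x : Fin n} {j : Fin (n / t + 1)} :
    j ∈ rowsetF n t σ x ↔ ∃ a : Fin n, dv n t a = dv n t x ∧ dv n t (σ a) = j := by
  simp only [rowsetF, Finset.mem_filter, Finset.mem_univ, true_and, contr,
    decide_eq_true_eq, permMatrix]
  constructor
  · rintro ⟨a, b, hax, hbj, hab⟩
    exact ⟨a, hax, by rw [hab]; exact hbj⟩
  · rintro ⟨a, hax, haj⟩
    exact ⟨a, σ a, hax, haj, by simp⟩

lemma self_mem_rowsetF {n t : ℕ} {σ : Equiv.Perm (Fin n)} {x : Fin n} :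
    dv n t (σ x) ∈ rowsetF n t σ x := mem_rowsetF.mpr ⟨x, rfl, rfl⟩

lemma rowsetF_card {n t : ℕ} (ht : 0 < t) (σ : Equiv.Perm (Fin n)) (x : Fin n) :
    (rowsetF n t σ x).card ≤ t := by
  classical
  set f : Fin (n / t + 1) → Fin t := fun j =>
    if h : ∃ a : Fin n, dv n t a = dv n t x ∧ dv n t (σ a) = j
    then ⟨((h.choose : Fin n) : ℕ) % t, Nat.mod_lt _ ht⟩ else ⟨0, ht⟩ with hf
  have : (rowsetF n t σ x).card ≤ (Finset.univ : Finset (Fin t)).card := by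
    apply Finset.card_le_card_of_injOn f (fun _ _ => Finset.mem_univ _)
    intro j hj j' hj' hjj
    have hj1 := mem_rowsetF.mp hj
    have hj2 := mem_rowsetF.mp hj'
    have e1 : f j = ⟨((hj1.choose : Fin n) : ℕ) % t, Nat.mod_lt _ ht⟩ := dif_pos hj1
    have e2 : f j' = ⟨((hj2.choose : Fin n) : ℕ) % t, Nat.mod_lt _ ht⟩ := dif_pos hj2
    obtain ⟨ha1, ha1'⟩ := hj1.choose_spec
    obtain ⟨ha2, ha2'⟩ := hj2.choose_spec
    set a1 := hj1.choose
    set a2 := hj2.choose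
    have hmod : (a1 : ℕ) % t = (a2 : ℕ) % t := by
      rw [e1, e2] at hjj
      exact congrArg Fin.val hjj
    have hdiv : (a1 : ℕ) / t = (a2 : ℕ) / t := by
      have h1 : (a1 : ℕ) / t = (x : ℕ) / t := by
        simpa [dv, Fin.ext_iff] using ha1
      have h2 : (a2 : ℕ) / t = (x : ℕ) / t := by
        simpa [dv, Fin.ext_iff] using ha2
      omega
    have haa : a1 = a2 := by
      apply Fin.ext
      rw [← Nat.div_add_mod (a1 : ℕ) t, ← Nat.div_add_mod (a2 : ℕ) t, hdiv, hmod]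
    rw [← ha1', ← ha2', haa]
  simpa using this

/-- the rank of the block-column of `σ x` among the nonempty block-columns -/
def rkF (n t : ℕ) (σ : Equiv.Perm (Fin n)) (x : Fin n) : ℕ :=
  ((rowsetF n t σ x).filter (fun j => j < dv n t (σ x))).card

lemma rkF_lt {n t : ℕ} (ht : 0 < t) (σ : Equiv.Perm (Fin n)) (x : Fin n) :
    rkF n t σ x < t := by
  have hss : (rowsetF n t σ x).filter (fun j => j < dv n t (σ x)) ⊂ rowsetF n t σ x := by
    constructor
    · exact Finset.filter_subset _ _
    · intro hsub
      have := hsub self_mem_rowsetF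
      simp [Finset.mem_filter] at this
  exact lt_of_lt_of_le (Finset.card_lt_card hss) (rowsetF_card ht σ x)

lemma main_count (n t : ℕ) (ht : 0 < t) :
    SP n π ≤ TP (n / t + 1) π * (t * t) ^ n := by
  classical
  set N := n / t + 1 with hN
  set Θ : {σ : Equiv.Perm (Fin n) // ¬ PermContains σ π} →
      {B : Fin N → Fin N → Bool // AvoidsPerm B π} × (Fin n → Fin t × Fin t) :=
    fun σ =>
      (⟨contr (dv n t) (dv n t) (permMatrix σ.1),
        contr_avoids π dv_mono dv_mono (permMatrix_avoids π σ.2)⟩,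
       fun x => (⟨rkF n t σ.1 x, rkF_lt ht σ.1 x⟩, ⟨(σ.1 x : ℕ) % t, Nat.mod_lt _ ht⟩)) with hΘ
  have hinj : Function.Injective Θ := by
    rintro ⟨σ, hσ⟩ ⟨τ, hτ⟩ hst
    simp only [hΘ, Prod.mk.injEq, Subtype.mk.injEq] at hst
    obtain ⟨hB, hdata⟩ := hst
    have hrk : ∀ x, rkF n t σ x = rkF n t τ x := by
      intro x
      have := congrFun hdata x
      simpa [Prod.ext_iff, Fin.ext_iff] using (congrArg Prod.fst this)
    have hmod : ∀ x, (σ x : ℕ) % t = (τ x : ℕ) % t := by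
      intro x
      have := congrFun hdata x
      simpa [Prod.ext_iff, Fin.ext_iff] using (congrArg Prod.snd this)
    have hRS : ∀ x, rowsetF n t σ x = rowsetF n t τ x := by
      intro x
      simp only [rowsetF]
      rw [hB]
    have hdv : ∀ x, dv n t (σ x) = dv n t (τ x) := by
      intro x
      apply filter_lt_card_inj (rowsetF n t σ x) self_mem_rowsetF
      · rw [hRS]; exact self_mem_rowsetF
      · have h2 : rkF n t τ x = ((rowsetF n t σ x).filter (fun j => j < dv n t (τ x))).card := by
          rw [rkF, hRS]
        rw [← h2, ← hrk x, rkF]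
    have hστ : σ = τ := by
      apply Equiv.ext
      intro x
      apply Fin.ext
      have h1 : (σ x : ℕ) / t = (τ x : ℕ) / t := by
        simpa [dv, Fin.ext_iff] using hdv x
      rw [← Nat.div_add_mod (σ x : ℕ) t, ← Nat.div_add_mod (τ x : ℕ) t, h1, hmod x]
    simp [hστ]
  have hcard := Nat.card_le_card_of_injective Θ hinj
  rw [SP]
  refine le_trans hcard ?_
  rw [Nat.card_prod]
  apply Nat.mul_le_mul
  · exact le_of_eq rfl
  · rw [Nat.card_eq_fintype_card, Fintype.card_fun]
    simp [Fintype.card_prod]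

end Aux

/-- There is an absolute constant `C > 0` with the following
property: for every permutation `π` and every real `c ≥ 1` such that
`ex(m,π) ≤ c·m` for all positive integers `m`, we have
`limsup_{n→∞} S_n(π)^{1/n} ≤ C·c²`. -/
theorem stmt14 :
    ∃ C : ℝ, 0 < C ∧ ∀ (k : ℕ) (π : Equiv.Perm (Fin k)) (c : ℝ), 1 ≤ c →
      (∀ m : ℕ, 0 < m → (exP m π : ℝ) ≤ c * (m : ℝ)) →
      limsup (fun n : ℕ => (SP n π : ℝ) ^ ((1 : ℝ) / (n : ℝ))) atTop ≤ C * c ^ 2 := by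
  refine ⟨1024, by norm_num, ?_⟩
  intro k π c hc hex
  set t : ℕ := ⌈c⌉₊ with hTdef
  have hc0 : (0 : ℝ) ≤ c := le_trans zero_le_one hc
  have ht0 : 0 < t := Nat.ceil_pos.mpr (by linarith)
  have ht0' : (0 : ℝ) < (t : ℝ) := by exact_mod_cast ht0
  have htc : c ≤ (t : ℝ) := Nat.le_ceil c
  have ht2c : (t : ℝ) ≤ 2 * c := by
    have := Nat.ceil_lt_add_one hc0
    linarith
  set A : ℝ := 2 * (16 : ℝ) ^ (2 * c) with hAdef
  have hA1 : (1 : ℝ) ≤ A := by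
    have : (1 : ℝ) ≤ (16 : ℝ) ^ (2 * c) := by
      rw [show (1 : ℝ) = (16 : ℝ) ^ (0 : ℝ) by rw [Real.rpow_zero]]
      apply Real.rpow_le_rpow_of_exponent_le (by norm_num)
      positivity
    simp only [hAdef]
    nlinarith
  have hA0 : (0 : ℝ) ≤ A := by linarith
  set D : ℝ := 1024 * c ^ 2 with hDdef
  have hD0 : (0 : ℝ) ≤ D := by positivity
  have key : ∀ n : ℕ, (SP n π : ℝ) ≤ A * D ^ n := by
    intro n
    have h1 : (SP n π : ℝ) ≤ (TP (n / t + 1) π : ℝ) * ((t * t : ℕ) : ℝ) ^ n := by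
      have := main_count π n t ht0
      exact_mod_cast this
    have h2 : (TP (n / t + 1) π : ℝ) ≤ 2 * (16 : ℝ) ^ (2 * c * ((n / t + 1 : ℕ) : ℝ)) :=
      T_bound π c hc hex (n / t + 1)
    have hd : ((n / t : ℕ) : ℝ) ≤ (n : ℝ) / (t : ℝ) := Nat.cast_div_le
    have h3 : c * ((n : ℝ) / (t : ℝ)) ≤ (n : ℝ) := by
      rw [mul_div_assoc', div_le_iff₀ ht0']
      nlinarith [Nat.cast_nonneg (α := ℝ) n]
    have hexp : 2 * c * ((n / t + 1 : ℕ) : ℝ) ≤ 2 * (n : ℝ) + 2 * c := by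
      push_cast
      nlinarith [mul_le_mul_of_nonneg_left hd hc0]
    have h4 : (16 : ℝ) ^ (2 * c * ((n / t + 1 : ℕ) : ℝ)) ≤
        (16 : ℝ) ^ (2 * (n : ℝ) + 2 * c) :=
      Real.rpow_le_rpow_of_exponent_le (by norm_num) hexp
    have h5 : (16 : ℝ) ^ (2 * (n : ℝ) + 2 * c) = (256 : ℝ) ^ n * (16 : ℝ) ^ (2 * c) := by
      rw [Real.rpow_add (by norm_num)]
      congr 1
      rw [show (2 : ℝ) * (n : ℝ) = ((2 * n : ℕ) : ℝ) by push_cast; ring,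
        Real.rpow_natCast, pow_mul]
      norm_num
    have h6 : (TP (n / t + 1) π : ℝ) ≤ A * (256 : ℝ) ^ n := by
      calc (TP (n / t + 1) π : ℝ) ≤ 2 * (16 : ℝ) ^ (2 * c * ((n / t + 1 : ℕ) : ℝ)) := h2
        _ ≤ 2 * ((256 : ℝ) ^ n * (16 : ℝ) ^ (2 * c)) := by
            rw [← h5]; nlinarith [Real.rpow_nonneg (show (0:ℝ) ≤ 16 by norm_num)
              (2 * c * ((n / t + 1 : ℕ) : ℝ))]
        _ = A * (256 : ℝ) ^ n := by rw [hAdef]; ring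
    have h7 : ((t * t : ℕ) : ℝ) ^ n ≥ 0 := by positivity
    calc (SP n π : ℝ) ≤ (TP (n / t + 1) π : ℝ) * ((t * t : ℕ) : ℝ) ^ n := h1
      _ ≤ (A * (256 : ℝ) ^ n) * ((t * t : ℕ) : ℝ) ^ n := by
          apply mul_le_mul_of_nonneg_right h6 h7
      _ = A * ((256 * ((t * t : ℕ) : ℝ)) ^ n) := by rw [mul_pow]; ring
      _ ≤ A * D ^ n := by
          apply mul_le_mul_of_nonneg_left _ hA0
          apply pow_le_pow_left₀ (by positivity)
          push_cast
          rw [hDdef]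
          nlinarith
  -- the comparison sequence
  set g : ℕ → ℝ := fun n => A ^ ((1 : ℝ) / (n : ℝ)) * D with hgdef
  have hfg : ∀ᶠ n in atTop, (SP n π : ℝ) ^ ((1 : ℝ) / (n : ℝ)) ≤ g n := by
    filter_upwards [eventually_ge_atTop 1] with n hn
    have hn0 : n ≠ 0 := by omega
    have step : (SP n π : ℝ) ^ ((1 : ℝ) / (n : ℝ)) ≤ (A * D ^ n) ^ ((1 : ℝ) / (n : ℝ)) :=
      Real.rpow_le_rpow (Nat.cast_nonneg _) (key n) (by positivity)
    have hsplit : (A * D ^ n) ^ ((1 : ℝ) / (n : ℝ)) =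
        A ^ ((1 : ℝ) / (n : ℝ)) * (D ^ n) ^ ((1 : ℝ) / (n : ℝ)) :=
      Real.mul_rpow hA0 (by positivity)
    have hDn : (D ^ n) ^ ((1 : ℝ) / (n : ℝ)) = D := by
      rw [one_div]
      exact Real.pow_rpow_inv_natCast hD0 hn0
    rw [hgdef]
    calc (SP n π : ℝ) ^ ((1 : ℝ) / (n : ℝ)) ≤ (A * D ^ n) ^ ((1 : ℝ) / (n : ℝ)) := step
      _ = A ^ ((1 : ℝ) / (n : ℝ)) * D := by rw [hsplit, hDn]
  have hgt : Tendsto g atTop (𝓝 D) := by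
    have h0 : Tendsto (fun n : ℕ => (1 : ℝ) / (n : ℝ)) atTop (𝓝 0) :=
      tendsto_one_div_atTop_nhds_zero_nat
    have hA : Tendsto (fun n : ℕ => A ^ ((1 : ℝ) / (n : ℝ))) atTop (𝓝 1) := by
      have hcont : ContinuousAt (fun x : ℝ => A ^ x) 0 :=
        Real.continuousAt_const_rpow (by linarith : A ≠ 0)
      have := hcont.tendsto.comp h0
      simpa [Real.rpow_zero, Function.comp_def] using this
    have := hA.mul_const D
    rw [hgdef]
    simpa [one_div, one_mul] using this
  have hco : IsCoboundedUnder (· ≤ ·) atTop (fun n : ℕ => (SP n π : ℝ) ^ ((1 : ℝ) / (n : ℝ))) :=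
    Filter.isCoboundedUnder_le_of_le atTop (x := 0)
      (fun n => Real.rpow_nonneg (Nat.cast_nonneg _) _)
  have hbd : IsBoundedUnder (· ≤ ·) atTop g := hgt.isBoundedUnder_le
  calc limsup (fun n : ℕ => (SP n π : ℝ) ^ ((1 : ℝ) / (n : ℝ))) atTop
      ≤ limsup g atTop := limsup_le_limsup hfg hco hbd
    _ = D := hgt.limsup_eq
    _ ≤ 1024 * c ^ 2 := by rw [hDdef]
end

section
/- For all positive integers k and n, m(n,J_k) ≤ 2k⁴·C(k²,k)·n, where C(k²,k) is the binomial coefficient 'k² choose k'. -/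
open Filter

-- division fiber has at most K elements
lemma card_div_fiber_le (n K : ℕ) (hK : 0 < K) (i : ℕ) :
    ((Finset.univ : Finset (Fin n)).filter fun p => p.val / K = i).card ≤ K := by
  have : ((Finset.univ : Finset (Fin n)).filter fun p => p.val / K = i).card ≤
      (Finset.range K).card := by
    apply Finset.card_le_card_of_injOn (fun p => p.val % K)
    · intro p _
      simpa using Nat.mod_lt _ hK
    · intro p hp q hq h
      simp only [Finset.coe_filter, Finset.mem_univ, true_and, Set.mem_setOf_eq] at hp hq
      have h' : p.val % K = q.val % K := h
      clear h
      have h1 : K * (p.val / K) + p.val % K = p.val := Nat.div_add_mod p.val K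
      have h2 : K * (q.val / K) + q.val % K = q.val := Nat.div_add_mod q.val K
      rw [hp] at h1
      rw [hq] at h2
      apply Fin.ext
      omega
  simpa using this

lemma not_intervalMinor_transpose {k n : ℕ} (A : Fin n → Fin n → Bool)
    (hA : ¬ IntervalMinor (J k k) A) : ¬ IntervalMinor (J k k) (fun p q => A q p) := by
  rintro ⟨rlo, rhi, clo, chi, h1, h2, h3, h4, h5⟩
  refine hA ⟨clo, chi, rlo, rhi, h3, h4, h1, h2, fun a b _ => ?_⟩
  obtain ⟨i, j, hi1, hi2, hj1, hj2, hone⟩ := h5 b a (by simp [J])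
  exact ⟨j, i, hj1, hj2, hi1, hi2, hone⟩

/-- columns used by block `(i,j)` : columns `q` in column-block `j` that contain
a one in some row of row-block `i`. -/
def colsUsed {n : ℕ} (K : ℕ) (A : Fin n → Fin n → Bool) (i j : ℕ) : Finset (Fin n) :=
  Finset.univ.filter fun q => q.val / K = j ∧ ∃ p : Fin n, p.val / K = i ∧ A p q = true

lemma contraction_avoid {k K n m : ℕ} (hk : 0 < k) (hK : 0 < K) (hn : 0 < n)
    (hmn : ∀ i : Fin m, i.val * K < n)
    (A : Fin n → Fin n → Bool) (hA : ¬ IntervalMinor (J k k) A) :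
    ¬ IntervalMinor (J k k)
      (fun i j : Fin m => decide (∃ p q : Fin n, p.val / K = i.val ∧ q.val / K = j.val ∧ A p q = true)) := by
  rintro ⟨rlo, rhi, clo, chi, h1, h2, h3, h4, h5⟩
  apply hA
  refine ⟨fun a => ⟨(rlo a).val * K, hmn _⟩, fun a => ⟨min ((rhi a).val * K + K - 1) (n-1), by omega⟩,
    fun b => ⟨(clo b).val * K, hmn _⟩, fun b => ⟨min ((chi b).val * K + K - 1) (n-1), by omega⟩,
    ?_, ?_, ?_, ?_, ?_⟩
  · intro a
    have h : (rlo a).val ≤ (rhi a).val := h1 a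
    have hb := hmn (rlo a)
    have hm : (rlo a).val * K ≤ (rhi a).val * K := Nat.mul_le_mul_right _ h
    simp only [Fin.mk_le_mk]
    omega
  · intro a b hab
    have h : (rhi a).val < (rlo b).val := h2 a b hab
    have hm : (rhi a).val * K + K ≤ (rlo b).val * K := by
      calc (rhi a).val * K + K = ((rhi a).val + 1) * K := by ring
        _ ≤ (rlo b).val * K := Nat.mul_le_mul_right _ h
    simp only [Fin.mk_lt_mk]
    omega
  · intro b
    have h : (clo b).val ≤ (chi b).val := h3 b
    have hb := hmn (clo b)
    have hm : (clo b).val * K ≤ (chi b).val * K := Nat.mul_le_mul_right _ h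
    simp only [Fin.mk_le_mk]
    omega
  · intro a b hab
    have h : (chi a).val < (clo b).val := h4 a b hab
    have hm : (chi a).val * K + K ≤ (clo b).val * K := by
      calc (chi a).val * K + K = ((chi a).val + 1) * K := by ring
        _ ≤ (clo b).val * K := Nat.mul_le_mul_right _ h
    simp only [Fin.mk_lt_mk]
    omega
  · intro a b hab
    obtain ⟨i, j, hi1, hi2, hj1, hj2, hone⟩ := h5 a b hab
    rw [decide_eq_true_iff] at hone
    obtain ⟨p, q, hp, hq, hpq⟩ := hone
    have hplt := p.isLt
    have hqlt := q.isLt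
    have hi1' : (rlo a).val ≤ i.val := hi1
    have hi2' : i.val ≤ (rhi a).val := hi2
    have hj1' : (clo b).val ≤ j.val := hj1
    have hj2' : j.val ≤ (chi b).val := hj2
    have hdp : K * (p.val / K) + p.val % K = p.val := Nat.div_add_mod p.val K
    have hdq : K * (q.val / K) + q.val % K = q.val := Nat.div_add_mod q.val K
    rw [hp] at hdp
    rw [hq] at hdq
    have hmp := Nat.mod_lt p.val hK
    have hmq := Nat.mod_lt q.val hK
    have m1 : (rlo a).val * K ≤ i.val * K := Nat.mul_le_mul_right _ hi1'
    have m2 : i.val * K ≤ (rhi a).val * K := Nat.mul_le_mul_right _ hi2'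
    have m3 : (clo b).val * K ≤ j.val * K := Nat.mul_le_mul_right _ hj1'
    have m4 : j.val * K ≤ (chi b).val * K := Nat.mul_le_mul_right _ hj2'
    have e1 : K * i.val = i.val * K := Nat.mul_comm _ _
    have e2 : K * j.val = j.val * K := Nat.mul_comm _ _
    refine ⟨p, q, ?_, ?_, ?_, ?_, hpq⟩ <;>
      simp only [Fin.mk_le_mk, Fin.le_def] <;> omega

lemma wide_count {k K n m : ℕ} (hk : 0 < k) (hK : 0 < K)
    (A : Fin n → Fin n → Bool) (hA : ¬ IntervalMinor (J k k) A) (j : ℕ) :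
    ((Finset.univ : Finset (Fin m)).filter fun i => k ≤ (colsUsed K A i.val j).card).card
      ≤ (k - 1) * Nat.choose K k := by
  by_contra hcon
  push_neg at hcon
  set W := ((Finset.univ : Finset (Fin m)).filter fun i => k ≤ (colsUsed K A i.val j).card)
    with hW
  -- choice of a k-subset of used columns for each wide block
  have hchoice : ∀ i : Fin m, i ∈ W → ∃ t, t ⊆ colsUsed K A i.val j ∧ t.card = k := by
    intro i hi
    rw [hW, Finset.mem_filter] at hi
    exact Finset.exists_subset_card_eq hi.2
  classical
  set S : Fin m → Finset (Fin n) := fun i =>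
    if h : i ∈ W then (hchoice i h).choose else ∅ with hS
  have hSsub : ∀ i ∈ W, S i ⊆ colsUsed K A i.val j := by
    intro i hi; rw [hS]; simp only [hi, dif_pos]; exact (hchoice i hi).choose_spec.1
  have hScard : ∀ i ∈ W, (S i).card = k := by
    intro i hi; rw [hS]; simp only [hi, dif_pos]; exact (hchoice i hi).choose_spec.2
  set colFib := ((Finset.univ : Finset (Fin n)).filter fun q => q.val / K = j) with hcolFib
  set T := colFib.powersetCard k with hT
  have hmaps : ∀ i ∈ W, S i ∈ T := by
    intro i hi
    rw [hT, Finset.mem_powersetCard]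
    refine ⟨(hSsub i hi).trans ?_, hScard i hi⟩
    intro q hq
    simp only [colsUsed, Finset.mem_filter] at hq
    rw [hcolFib, Finset.mem_filter]
    exact ⟨Finset.mem_univ _, hq.2.1⟩
  have hTcard : T.card ≤ Nat.choose K k := by
    rw [hT, Finset.card_powersetCard]
    exact Nat.choose_le_choose _ (card_div_fiber_le n K hK j)
  -- pigeonhole
  have hpig : ∃ y ∈ T, k - 1 < (W.filter fun i => S i = y).card := by
    apply Finset.exists_lt_card_fiber_of_mul_lt_card_of_maps_to hmaps
    calc T.card * (k - 1) ≤ Nat.choose K k * (k - 1) := Nat.mul_le_mul_right _ hTcard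
      _ = (k - 1) * Nat.choose K k := Nat.mul_comm _ _
      _ < W.card := hcon
  obtain ⟨y, hyT, hycard⟩ := hpig
  obtain ⟨I, hIsub, hIcard⟩ :=
    Finset.exists_subset_card_eq (s := W.filter fun i => S i = y) (n := k) (by omega)
  have hycard' : y.card = k := (Finset.mem_powersetCard.mp hyT).2
  set e := I.orderEmbOfFin hIcard with he
  set g := y.orderEmbOfFin hycard' with hg
  -- each e a is a wide block with S (e a) = y
  have heW : ∀ a : Fin k, e a ∈ W ∧ S (e a) = y := by
    intro a
    have := hIsub (I.orderEmbOfFin_mem hIcard a)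
    rw [Finset.mem_filter] at this
    exact this
  have hgy : ∀ b : Fin k, g b ∈ y := fun b => y.orderEmbOfFin_mem hycard' b
  have hsubcol : ∀ a : Fin k, y ⊆ colsUsed K A (e a).val j := by
    intro a
    rw [← (heW a).2]
    exact hSsub _ (heW a).1
  -- witnesses: for every a b there is p with p / K = e a and A p (g b) = true
  have hwit : ∀ a b : Fin k, ∃ p : Fin n, p.val / K = (e a).val ∧ A p (g b) = true := by
    intro a b
    have := hsubcol a (hgy b)
    simp only [colsUsed, Finset.mem_filter] at this
    exact this.2.2
  have hbound : ∀ a : Fin k, (e a).val * K < n := by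
    intro a
    obtain ⟨p, hp, -⟩ := hwit a ⟨0, hk⟩
    have h2 : K * (p.val / K) + p.val % K = p.val := Nat.div_add_mod p.val K
    have := p.isLt
    have e1 : K * (e a).val = (e a).val * K := Nat.mul_comm _ _
    rw [hp] at h2
    omega
  have hn : 0 < n := by
    have := hbound ⟨0, hk⟩
    omega
  apply hA
  refine ⟨fun a => ⟨(e a).val * K, hbound a⟩,
    fun a => ⟨min ((e a).val * K + K - 1) (n - 1), by omega⟩,
    g, g, ?_, ?_, fun b => le_refl _, ?_, ?_⟩
  · intro a
    have := hbound a
    simp only [Fin.mk_le_mk]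
    omega
  · intro a b hab
    have h : (e a).val < (e b).val := e.strictMono hab
    have hm : (e a).val * K + K ≤ (e b).val * K := by
      calc (e a).val * K + K = ((e a).val + 1) * K := by ring
        _ ≤ (e b).val * K := Nat.mul_le_mul_right _ h
    simp only [Fin.mk_lt_mk]
    omega
  · intro a b hab
    exact g.strictMono hab
  · intro a b _
    obtain ⟨p, hp, hApg⟩ := hwit a b
    refine ⟨p, g b, ?_, ?_, le_refl _, le_refl _, hApg⟩
    · have h2 : K * (p.val / K) + p.val % K = p.val := Nat.div_add_mod p.val K
      rw [hp] at h2
      have e1 : K * (e a).val = (e a).val * K := Nat.mul_comm _ _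
      simp only [Fin.mk_le_mk, Fin.le_def]
      omega
    · have h2 : K * (p.val / K) + p.val % K = p.val := Nat.div_add_mod p.val K
      have hm := Nat.mod_lt p.val hK
      rw [hp] at h2
      have e1 : K * (e a).val = (e a).val * K := Nat.mul_comm _ _
      have := p.isLt
      simp only [Fin.mk_le_mk, Fin.le_def]
      omega

lemma mass_le_sq {n : ℕ} (A : Fin n → Fin n → Bool) : mass A ≤ n * n := by
  unfold mass
  calc (Finset.univ.filter fun p : Fin n × Fin n => A p.1 p.2 = true).card
      ≤ (Finset.univ : Finset (Fin n × Fin n)).card := Finset.card_filter_le _ _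
    _ = n * n := by simp

lemma main_bound (k : ℕ) (hk : 2 ≤ k) :
    ∀ n : ℕ, ∀ A : Fin n → Fin n → Bool, ¬ IntervalMinor (J k k) A →
      mass A ≤ 2 * k ^ 4 * Nat.choose (k ^ 2) k * n := by
  intro n
  induction n using Nat.strong_induction_on with
  | _ n ih =>
    intro A hA
    set C := Nat.choose (k ^ 2) k with hC
    have hC1 : 1 ≤ C := Nat.choose_pos (Nat.le_self_pow two_ne_zero k)
    set c := 2 * k ^ 4 * C with hc
    by_cases hn : n ≤ c
    · calc mass A ≤ n * n := mass_le_sq A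
        _ ≤ c * n := Nat.mul_le_mul_right _ hn
    push_neg at hn
    have hc4 : 2 * k ^ 4 ≤ c := by
      rw [hc]; exact Nat.le_mul_of_pos_right _ hC1
    have hk4 : 32 ≤ 2 * k ^ 4 := by
      have : 2 ^ 4 ≤ k ^ 4 := Nat.pow_le_pow_left hk 4
      omega
    set K := k ^ 2 with hK
    have hKpos : 0 < K := by positivity
    have hKK : 2 * (K * K) ≤ c := by
      calc 2 * (K * K) = 2 * k ^ 4 := by rw [hK]; ring
        _ ≤ c := hc4
    set m := (n - 1) / K + 1 with hm
    have hd1 : ((n-1)/K) * K ≤ n - 1 := Nat.div_mul_le_self _ _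
    have hd2 : 2 * K ≤ (n-1)/K := by
      rw [Nat.le_div_iff_mul_le hKpos]
      have : 2 * K * K = 2 * (K * K) := by ring
      omega
    have hmK : ∀ i : Fin m, i.val * K < n := by
      intro i
      have h1 : i.val ≤ (n-1)/K := by have := i.isLt; omega
      have h2 : i.val * K ≤ ((n-1)/K) * K := Nat.mul_le_mul_right _ h1
      omega
    have hpm : ∀ p : Fin n, p.val / K < m := by
      intro p
      have h1 : p.val ≤ n - 1 := by have := p.isLt; omega
      have h2 : p.val / K ≤ (n-1)/K := Nat.div_le_div_right h1
      omega
    set B : Fin m → Fin m → Bool := fun i j =>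
      decide (∃ p q : Fin n, p.val / K = i.val ∧ q.val / K = j.val ∧ A p q = true) with hB
    have hBavoid : ¬ IntervalMinor (J k k) B :=
      contraction_avoid (by omega) hKpos (by omega) hmK A hA
    have hmlt : m < n := by
      have h2K : 1 < K := by
        rw [hK]
        have := Nat.pow_le_pow_left hk 2
        omega
      have := Nat.div_lt_self (show 0 < n - 1 by omega) h2K
      omega
    have hmassB : mass B ≤ c * m := ih m hmlt B hBavoid
    have hAt : ¬ IntervalMinor (J k k) (fun p q : Fin n => A q p) :=
      not_intervalMinor_transpose A hA
    -- fiber decomposition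
    set Fib : Fin m × Fin m → Finset (Fin n × Fin n) := fun b =>
      (Finset.univ.filter fun pq : Fin n × Fin n => A pq.1 pq.2 = true).filter
        fun pq => (((⟨pq.1.val / K, hpm _⟩ : Fin m), (⟨pq.2.val / K, hpm _⟩ : Fin m)) = b) with hFib
    have key : mass A = ∑ b : Fin m × Fin m, (Fib b).card := by
      unfold mass
      exact Finset.card_eq_sum_card_fiberwise (fun x _ => Finset.mem_univ _)
    have hmem : ∀ (b : Fin m × Fin m) (pq : Fin n × Fin n), pq ∈ Fib b ↔
        (A pq.1 pq.2 = true ∧ pq.1.val / K = b.1.val ∧ pq.2.val / K = b.2.val) := by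
      intro b pq
      rw [hFib]
      simp only [Finset.mem_filter, Finset.mem_univ, true_and, Prod.ext_iff, Fin.ext_iff]
    -- per-block bounds
    have hcard4 : ∀ b, (Fib b).card ≤ K * K := by
      intro b
      have hsub : Fib b ⊆ (Finset.univ.filter fun p : Fin n => p.val / K = b.1.val) ×ˢ
          (Finset.univ.filter fun q : Fin n => q.val / K = b.2.val) := by
        intro pq hpq
        rw [hmem] at hpq
        rw [Finset.mem_product]
        simp only [Finset.mem_filter, Finset.mem_univ, true_and]
        exact ⟨hpq.2.1, hpq.2.2⟩
      calc (Fib b).card ≤ _ := Finset.card_le_card hsub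
        _ = _ * _ := Finset.card_product _ _
        _ ≤ K * K := Nat.mul_le_mul (card_div_fiber_le n K hKpos _) (card_div_fiber_le n K hKpos _)
    have hsmall : ∀ b : Fin m × Fin m, ¬ (k ≤ (colsUsed K A b.1.val b.2.val).card) →
        ¬ (k ≤ (colsUsed K (fun p q : Fin n => A q p) b.2.val b.1.val).card) →
        (Fib b).card ≤ (k-1) * (k-1) := by
      intro b h1 h2
      have hsub : Fib b ⊆ (colsUsed K (fun p q : Fin n => A q p) b.2.val b.1.val) ×ˢ
          (colsUsed K A b.1.val b.2.val) := by
        intro pq hpq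
        rw [hmem] at hpq
        rw [Finset.mem_product]
        simp only [colsUsed, Finset.mem_filter, Finset.mem_univ, true_and]
        exact ⟨⟨hpq.2.1, pq.2, hpq.2.2, hpq.1⟩, ⟨hpq.2.2, pq.1, hpq.2.1, hpq.1⟩⟩
      calc (Fib b).card ≤ _ := Finset.card_le_card hsub
        _ = _ * _ := Finset.card_product _ _
        _ ≤ (k-1) * (k-1) := Nat.mul_le_mul (by omega) (by omega)
    have hBne : ∀ b : Fin m × Fin m, (Fib b).Nonempty → B b.1 b.2 = true := by
      intro b ⟨pq, hpq⟩
      rw [hmem] at hpq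
      rw [hB, decide_eq_true_iff]
      exact ⟨pq.1, pq.2, hpq.2.1, hpq.2.2, hpq.1⟩
    have hper : ∀ b : Fin m × Fin m, (Fib b).card ≤
        (if k ≤ (colsUsed K A b.1.val b.2.val).card then K*K else 0) +
        ((if k ≤ (colsUsed K (fun p q : Fin n => A q p) b.2.val b.1.val).card then K*K else 0) +
        (k-1) * (k-1) * (if B b.1 b.2 = true then 1 else 0)) := by
      intro b
      by_cases h1 : k ≤ (colsUsed K A b.1.val b.2.val).card
      · rw [if_pos h1]
        have := hcard4 b
        omega
      rw [if_neg h1]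
      by_cases h2 : k ≤ (colsUsed K (fun p q : Fin n => A q p) b.2.val b.1.val).card
      · rw [if_pos h2]
        have := hcard4 b
        omega
      rw [if_neg h2]
      rcases Finset.eq_empty_or_nonempty (Fib b) with he | he
      · simp [he]
      · rw [if_pos (hBne b he)]
        have := hsmall b h1 h2
        omega
    -- summing up
    have hinner1 : ∀ j : Fin m, ∑ i : Fin m,
        (if k ≤ (colsUsed K A i.val j.val).card then K*K else 0) ≤
        (k-1) * Nat.choose K k * (K*K) := by
      intro j
      calc ∑ i : Fin m, (if k ≤ (colsUsed K A i.val j.val).card then K*K else 0)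
          = ∑ i ∈ Finset.univ.filter (fun i : Fin m => k ≤ (colsUsed K A i.val j.val).card),
              (K*K) := (Finset.sum_filter _ _).symm
        _ = (Finset.univ.filter (fun i : Fin m => k ≤ (colsUsed K A i.val j.val).card)).card
              * (K*K) := by rw [Finset.sum_const, smul_eq_mul]
        _ ≤ (k-1) * Nat.choose K k * (K*K) :=
            Nat.mul_le_mul_right _ (wide_count (by omega) hKpos A hA j.val)
    have hinner2 : ∀ i : Fin m, ∑ j : Fin m,
        (if k ≤ (colsUsed K (fun p q : Fin n => A q p) j.val i.val).card then K*K else 0) ≤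
        (k-1) * Nat.choose K k * (K*K) := by
      intro i
      calc ∑ j : Fin m, (if k ≤ (colsUsed K (fun p q : Fin n => A q p) j.val i.val).card then K*K else 0)
          = ∑ j ∈ Finset.univ.filter (fun j : Fin m => k ≤ (colsUsed K (fun p q : Fin n => A q p) j.val i.val).card),
              (K*K) := (Finset.sum_filter _ _).symm
        _ = (Finset.univ.filter (fun j : Fin m => k ≤ (colsUsed K (fun p q : Fin n => A q p) j.val i.val).card)).card
              * (K*K) := by rw [Finset.sum_const, smul_eq_mul]
        _ ≤ (k-1) * Nat.choose K k * (K*K) :=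
            Nat.mul_le_mul_right _ (wide_count (by omega) hKpos _ hAt i.val)
    have hsum1 : ∑ b : Fin m × Fin m,
        (if k ≤ (colsUsed K A b.1.val b.2.val).card then K*K else 0) ≤
        m * ((k-1) * Nat.choose K k * (K*K)) := by
      rw [← Finset.univ_product_univ, Finset.sum_product]
      rw [Finset.sum_comm]
      calc ∑ j : Fin m, ∑ i : Fin m, (if k ≤ (colsUsed K A i.val j.val).card then K*K else 0)
          ≤ ∑ _j : Fin m, ((k-1) * Nat.choose K k * (K*K)) :=
            Finset.sum_le_sum (fun j _ => hinner1 j)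
        _ = m * ((k-1) * Nat.choose K k * (K*K)) := by
            rw [Finset.sum_const, smul_eq_mul, Finset.card_univ, Fintype.card_fin]
    have hsum2 : ∑ b : Fin m × Fin m,
        (if k ≤ (colsUsed K (fun p q : Fin n => A q p) b.2.val b.1.val).card then K*K else 0) ≤
        m * ((k-1) * Nat.choose K k * (K*K)) := by
      rw [← Finset.univ_product_univ, Finset.sum_product]
      calc ∑ i : Fin m, ∑ j : Fin m,
            (if k ≤ (colsUsed K (fun p q : Fin n => A q p) j.val i.val).card then K*K else 0)
          ≤ ∑ _i : Fin m, ((k-1) * Nat.choose K k * (K*K)) :=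
            Finset.sum_le_sum (fun i _ => hinner2 i)
        _ = m * ((k-1) * Nat.choose K k * (K*K)) := by
            rw [Finset.sum_const, smul_eq_mul, Finset.card_univ, Fintype.card_fin]
    have hsum3 : ∑ b : Fin m × Fin m, (if B b.1 b.2 = true then 1 else 0) = mass B := by
      unfold mass
      rw [Finset.card_filter]
    -- combine
    have hcomb : mass A ≤ m * ((k-1) * Nat.choose K k * (K*K)) +
        (m * ((k-1) * Nat.choose K k * (K*K)) + (k-1)*(k-1) * mass B) := by
      rw [key]
      calc ∑ b : Fin m × Fin m, (Fib b).card ≤ _ := Finset.sum_le_sum (fun b _ => hper b)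
        _ = _ := by rw [Finset.sum_add_distrib, Finset.sum_add_distrib, ← Finset.mul_sum, hsum3]
        _ ≤ _ := Nat.add_le_add hsum1 (Nat.add_le_add hsum2 le_rfl)
    -- arithmetic conclusion
    have harith : m * ((k-1) * k) ≤ n := by
      have a0 : (k-1) * k + k = K := by
        rw [hK]
        obtain ⟨j, rfl⟩ : ∃ j, k = j + 1 := ⟨k-1, by omega⟩
        simp only [Nat.add_sub_cancel]
        ring
      have a1 : m * ((k-1)*k) + m * k = m * K := by rw [← Nat.mul_add, a0]
      have a2 : m * K = ((n-1)/K) * K + K := by rw [hm]; ring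
      have a3 : m ≤ m * k := Nat.le_mul_of_pos_right _ (by omega)
      omega
    have e : m * ((k-1) * Nat.choose K k * (K*K)) +
        (m * ((k-1) * Nat.choose K k * (K*K)) + (k-1)*(k-1)*(c*m)) =
        c * (m * ((k-1)*k)) := by
      rw [← hC, hc, hK]
      obtain ⟨j, rfl⟩ : ∃ j, k = j + 1 := ⟨k-1, by omega⟩
      simp only [Nat.add_sub_cancel]
      ring
    calc mass A ≤ _ := hcomb
      _ ≤ m * ((k-1) * Nat.choose K k * (K*K)) +
          (m * ((k-1) * Nat.choose K k * (K*K)) + (k-1)*(k-1)*(c*m)) := by gcongr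
      _ = c * (m * ((k-1)*k)) := e
      _ ≤ c * n := Nat.mul_le_mul_left _ harith

lemma mass_eq_zero_of_avoid_J1 {n : ℕ} (A : Fin n → Fin n → Bool)
    (hA : ¬ IntervalMinor (J 1 1) A) : mass A = 0 := by
  by_contra h
  have : ((Finset.univ : Finset (Fin n × Fin n)).filter fun p => A p.1 p.2 = true).Nonempty := by
    rw [← Finset.card_pos]
    unfold mass at h
    omega
  obtain ⟨pq, hpq⟩ := this
  rw [Finset.mem_filter] at hpq
  apply hA
  exact ⟨fun _ => pq.1, fun _ => pq.1, fun _ => pq.2, fun _ => pq.2,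
    fun _ => le_refl _, fun a b hab => absurd hab (by omega),
    fun _ => le_refl _, fun a b hab => absurd hab (by omega),
    fun _ _ _ => ⟨pq.1, pq.2, le_refl _, le_refl _, le_refl _, le_refl _, hpq.2⟩⟩

lemma full_bound (k n : ℕ) (hk : 0 < k) (A : Fin n → Fin n → Bool)
    (hA : ¬ IntervalMinor (J k k) A) :
    mass A ≤ 2 * k ^ 4 * Nat.choose (k ^ 2) k * n := by
  rcases Nat.lt_or_ge k 2 with h | h
  · interval_cases k
    · rw [mass_eq_zero_of_avoid_J1 A hA]
      exact Nat.zero_le _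
  · exact main_bound k h n A hA


/-- For all positive integers `k` and `n`,
`m(n,J_k) ≤ 2k⁴·C(k²,k)·n`. -/
theorem stmt16 (k n : ℕ) (hk : 0 < k) (hn : 0 < n) :
    mP n (J k k) ≤ 2 * k ^ 4 * Nat.choose (k ^ 2) k * n := by
  unfold mP
  apply csSup_le'
  rintro x ⟨A, hA, rfl⟩
  exact full_bound k n hk A hA
end

section
/- For all positive integers r, k, s, t with k ≥ 2, s ≤ t and t even, the inequality f_{r,k}(t,s) ≤ 2·f_{r,k}(t/2,s) + 2·f_{r,k−1}(t/2,⌈s/2⌉) holds (as an inequality of extended natural numbers). -/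
open Filter

lemma select_minor {k l N t M u : ℕ} {P : Fin k → Fin l → Bool} {A : Fin N → Fin t → Bool}
    (er : Fin M → Fin N) (her : StrictMono er) (ec : Fin u → Fin t) (hec : StrictMono ec)
    (h : IntervalMinor P (fun i j => A (er i) (ec j))) : IntervalMinor P A := by
  obtain ⟨rlo, rhi, clo, chi, h1, h2, h3, h4, h5⟩ := h
  refine ⟨er ∘ rlo, er ∘ rhi, ec ∘ clo, ec ∘ chi,
    fun a => her.monotone (h1 a), fun a b hab => her (h2 a b hab),
    fun a => hec.monotone (h3 a), fun a b hab => hec (h4 a b hab), fun a b hab => ?_⟩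
  obtain ⟨i, j, hi1, hi2, hj1, hj2, hA⟩ := h5 a b hab
  exact ⟨er i, ec j, her.monotone hi1, her.monotone hi2, hec.monotone hj1, hec.monotone hj2, hA⟩

lemma extend_right {r k' m M : ℕ} (hr : 0 < r) (C : Fin M → Fin (m + m) → Bool)
    (hone : ∀ i, ∃ j : Fin m, C i (Fin.natAdd m j) = true)
    (h : IntervalMinor (J r k') (fun i (j : Fin m) => C i (Fin.castAdd m j))) :
    IntervalMinor (J r (k' + 1)) C := by
  obtain ⟨rlo, rhi, clo, chi, h1, h2, h3, h4, h5⟩ := h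
  have hm : 0 < m := (hone (rlo ⟨0, hr⟩)).choose.pos
  refine ⟨rlo, rhi,
    (fun b => if hb : b.val < k' then Fin.castAdd m (clo ⟨b.val, hb⟩)
      else Fin.natAdd m ⟨0, hm⟩),
    (fun b => if hb : b.val < k' then Fin.castAdd m (chi ⟨b.val, hb⟩)
      else Fin.natAdd m ⟨m - 1, by omega⟩),
    h1, h2, ?_, ?_, ?_⟩
  · intro a
    by_cases hb : a.val < k'
    · have := Fin.le_def.mp (h3 ⟨a.val, hb⟩)
      simp only [dif_pos hb, Fin.le_def, Fin.coe_castAdd]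
      omega
    · simp only [dif_neg hb, Fin.le_def, Fin.coe_natAdd]
      omega
  · intro a b hab
    have habv : a.val < b.val := Fin.lt_def.mp hab
    have hbb := b.isLt
    have ha : a.val < k' := by omega
    by_cases hb : b.val < k'
    · have := Fin.lt_def.mp (h4 ⟨a.val, ha⟩ ⟨b.val, hb⟩ (Fin.lt_def.mpr habv))
      simp only [dif_pos ha, dif_pos hb, Fin.lt_def, Fin.coe_castAdd]
      omega
    · have := (chi ⟨a.val, ha⟩).isLt
      simp only [dif_pos ha, dif_neg hb, Fin.lt_def, Fin.coe_castAdd, Fin.coe_natAdd]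
      omega
  · intro a b _
    by_cases hb : b.val < k'
    · obtain ⟨i, j, hi1, hi2, hj1, hj2, hC⟩ := h5 a ⟨b.val, hb⟩ rfl
      have hj1' := Fin.le_def.mp hj1
      have hj2' := Fin.le_def.mp hj2
      refine ⟨i, Fin.castAdd m j, hi1, hi2, ?_, ?_, hC⟩
      · simp only [dif_pos hb, Fin.le_def, Fin.coe_castAdd]; omega
      · simp only [dif_pos hb, Fin.le_def, Fin.coe_castAdd]; omega
    · obtain ⟨j, hj⟩ := hone (rlo a)
      have := j.isLt
      refine ⟨rlo a, Fin.natAdd m j, le_refl _, h1 a, ?_, ?_, hj⟩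
      · simp only [dif_neg hb, Fin.le_def, Fin.coe_natAdd]; omega
      · simp only [dif_neg hb, Fin.le_def, Fin.coe_natAdd]; omega

lemma extend_left {r k' m M : ℕ} (hr : 0 < r) (C : Fin M → Fin (m + m) → Bool)
    (hone : ∀ i, ∃ j : Fin m, C i (Fin.castAdd m j) = true)
    (h : IntervalMinor (J r k') (fun i (j : Fin m) => C i (Fin.natAdd m j))) :
    IntervalMinor (J r (k' + 1)) C := by
  obtain ⟨rlo, rhi, clo, chi, h1, h2, h3, h4, h5⟩ := h
  have hm : 0 < m := (hone (rlo ⟨0, hr⟩)).choose.pos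
  refine ⟨rlo, rhi,
    (fun b => if hb : 0 < b.val then Fin.natAdd m (clo ⟨b.val - 1, by have := b.isLt; omega⟩)
      else Fin.castAdd m ⟨0, hm⟩),
    (fun b => if hb : 0 < b.val then Fin.natAdd m (chi ⟨b.val - 1, by have := b.isLt; omega⟩)
      else Fin.castAdd m ⟨m - 1, by omega⟩),
    h1, h2, ?_, ?_, ?_⟩
  · intro a
    by_cases hb : 0 < a.val
    · have := Fin.le_def.mp (h3 ⟨a.val - 1, by have := a.isLt; omega⟩)
      simp only [dif_pos hb, Fin.le_def, Fin.coe_natAdd]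
      omega
    · simp only [dif_neg hb, Fin.le_def, Fin.coe_castAdd]
      omega
  · intro a b hab
    have habv : a.val < b.val := Fin.lt_def.mp hab
    have hbb := b.isLt
    have hb : 0 < b.val := by omega
    by_cases ha : 0 < a.val
    · have := Fin.lt_def.mp (h4 ⟨a.val - 1, by have := a.isLt; omega⟩
        ⟨b.val - 1, by omega⟩ (Fin.lt_def.mpr (by simp; omega)))
      simp only [dif_pos ha, dif_pos hb, Fin.lt_def, Fin.coe_natAdd]
      omega
    · simp only [dif_neg ha, dif_pos hb, Fin.lt_def, Fin.coe_castAdd, Fin.coe_natAdd]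
      omega
  · intro a b _
    by_cases hb : 0 < b.val
    · obtain ⟨i, j, hi1, hi2, hj1, hj2, hC⟩ := h5 a ⟨b.val - 1, by have := b.isLt; omega⟩ rfl
      have hj1' := Fin.le_def.mp hj1
      have hj2' := Fin.le_def.mp hj2
      refine ⟨i, Fin.natAdd m j, hi1, hi2, ?_, ?_, hC⟩
      · simp only [dif_pos hb, Fin.le_def, Fin.coe_natAdd]; omega
      · simp only [dif_pos hb, Fin.le_def, Fin.coe_natAdd]; omega
    · obtain ⟨j, hj⟩ := hone (rlo a)
      have := j.isLt
      refine ⟨rlo a, Fin.castAdd m j, le_refl _, h1 a, ?_, ?_, hj⟩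
      · simp only [dif_neg hb, Fin.le_def, Fin.coe_castAdd]; omega
      · simp only [dif_neg hb, Fin.le_def, Fin.coe_castAdd]; omega

lemma castAdd_strictMono (m : ℕ) : StrictMono (Fin.castAdd m : Fin m → Fin (m + m)) := by
  intro a b h; simp only [Fin.lt_def, Fin.coe_castAdd]; exact h

lemma natAdd_strictMono (m : ℕ) : StrictMono (Fin.natAdd m : Fin m → Fin (m + m)) := by
  intro a b h; simp only [Fin.lt_def, Fin.coe_natAdd]; omega

/-- For all positive integers `r, k, s, t` with `k ≥ 2`, `s ≤ t`
and `t` even, `f_{r,k}(t,s) ≤ 2·f_{r,k}(t/2,s) + 2·f_{r,k−1}(t/2,⌈s/2⌉)` as an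
inequality of extended natural numbers. -/
theorem stmt17 (r k s t : ℕ) (hr : 0 < r) (hk : 2 ≤ k) (hs : 0 < s) (hst : s ≤ t)
    (ht : Even t) :
    fP (J r k) t s ≤ 2 * fP (J r k) (t / 2) s + 2 * fP (J r (k - 1)) (t / 2) ((s + 1) / 2) := by

  classical
  obtain ⟨m, rfl⟩ := ht
  obtain ⟨k', rfl⟩ : ∃ k', k = k' + 1 := ⟨k - 1, by omega⟩
  have hhalf : (m + m) / 2 = m := by omega
  rw [hhalf]
  show fP (J r (k' + 1)) (m + m) s ≤
      2 * fP (J r (k' + 1)) m s + 2 * fP (J r k') m ((s + 1) / 2)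
  refine sSup_le fun x hx => ?_
  obtain ⟨N, rfl, A, hrows, havoid⟩ := hx
  set S1 : Finset (Fin N) := Finset.univ.filter (fun i =>
    s ≤ (Finset.univ.filter fun j : Fin m => A i (Fin.castAdd m j) = true).card) with hS1
  set S2 : Finset (Fin N) := Finset.univ.filter (fun i =>
    s ≤ (Finset.univ.filter fun j : Fin m => A i (Fin.natAdd m j) = true).card) with hS2
  set S3 : Finset (Fin N) := Finset.univ.filter (fun i =>
    (s + 1) / 2 ≤ (Finset.univ.filter fun j : Fin m => A i (Fin.castAdd m j) = true).card ∧
    1 ≤ (Finset.univ.filter fun j : Fin m => A i (Fin.natAdd m j) = true).card) with hS3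
  set S4 : Finset (Fin N) := Finset.univ.filter (fun i =>
    (s + 1) / 2 ≤ (Finset.univ.filter fun j : Fin m => A i (Fin.natAdd m j) = true).card ∧
    1 ≤ (Finset.univ.filter fun j : Fin m => A i (Fin.castAdd m j) = true).card) with hS4
  -- the bound for S1
  have hb1 : (S1.card : ℕ∞) ≤ fP (J r (k' + 1)) m s := by
    refine le_sSup ⟨S1.card, rfl,
      fun i j => A (S1.orderEmbOfFin rfl i) (Fin.castAdd m j), ?_, ?_⟩
    · intro i
      have hmem := S1.orderEmbOfFin_mem rfl i
      exact (Finset.mem_filter.mp hmem).2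
    · intro hcon
      exact havoid (select_minor _ (S1.orderEmbOfFin rfl).strictMono _
        (castAdd_strictMono m) hcon)
  have hb2 : (S2.card : ℕ∞) ≤ fP (J r (k' + 1)) m s := by
    refine le_sSup ⟨S2.card, rfl,
      fun i j => A (S2.orderEmbOfFin rfl i) (Fin.natAdd m j), ?_, ?_⟩
    · intro i
      have hmem := S2.orderEmbOfFin_mem rfl i
      exact (Finset.mem_filter.mp hmem).2
    · intro hcon
      exact havoid (select_minor _ (S2.orderEmbOfFin rfl).strictMono _
        (natAdd_strictMono m) hcon)
  have hb3 : (S3.card : ℕ∞) ≤ fP (J r k') m ((s + 1) / 2) := by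
    refine le_sSup ⟨S3.card, rfl,
      fun i j => A (S3.orderEmbOfFin rfl i) (Fin.castAdd m j), ?_, ?_⟩
    · intro i
      have hmem := S3.orderEmbOfFin_mem rfl i
      exact (Finset.mem_filter.mp hmem).2.1
    · intro hcon
      apply havoid
      refine select_minor (S3.orderEmbOfFin rfl) (S3.orderEmbOfFin rfl).strictMono
        id strictMono_id ?_
      refine extend_right hr _ (fun i => ?_) hcon
      have hmem := S3.orderEmbOfFin_mem rfl i
      obtain ⟨j, hj⟩ := Finset.card_pos.mp (Finset.mem_filter.mp hmem).2.2
      exact ⟨j, (Finset.mem_filter.mp hj).2⟩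
  have hb4 : (S4.card : ℕ∞) ≤ fP (J r k') m ((s + 1) / 2) := by
    refine le_sSup ⟨S4.card, rfl,
      fun i j => A (S4.orderEmbOfFin rfl i) (Fin.natAdd m j), ?_, ?_⟩
    · intro i
      have hmem := S4.orderEmbOfFin_mem rfl i
      exact (Finset.mem_filter.mp hmem).2.1
    · intro hcon
      apply havoid
      refine select_minor (S4.orderEmbOfFin rfl) (S4.orderEmbOfFin rfl).strictMono
        id strictMono_id ?_
      refine extend_left hr _ (fun i => ?_) hcon
      have hmem := S4.orderEmbOfFin_mem rfl i
      obtain ⟨j, hj⟩ := Finset.card_pos.mp (Finset.mem_filter.mp hmem).2.2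
      exact ⟨j, (Finset.mem_filter.mp hj).2⟩
  -- covering
  have hcover : ∀ i : Fin N, i ∈ S1 ∪ S2 ∪ S3 ∪ S4 := by
    intro i
    have htot := hrows i
    have hkey : (Finset.univ.filter fun j => A i j = true).card
        = (Finset.univ.filter fun j : Fin m => A i (Fin.castAdd m j) = true).card
        + (Finset.univ.filter fun j : Fin m => A i (Fin.natAdd m j) = true).card := by
      simp only [Finset.card_filter]
      exact Fin.sum_univ_add (fun j => if A i j = true then 1 else 0)
    simp only [hS1, hS2, hS3, hS4, Finset.mem_union, Finset.mem_filter, Finset.mem_univ,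
      true_and]
    omega
  have hNle : N ≤ S1.card + S2.card + S3.card + S4.card := by
    calc N = (Finset.univ : Finset (Fin N)).card := (Finset.card_fin N).symm
      _ ≤ (S1 ∪ S2 ∪ S3 ∪ S4).card := Finset.card_le_card (fun i _ => hcover i)
      _ ≤ (S1 ∪ S2 ∪ S3).card + S4.card := Finset.card_union_le _ _
      _ ≤ (S1 ∪ S2).card + S3.card + S4.card :=
          Nat.add_le_add_right (Finset.card_union_le _ _) _
      _ ≤ S1.card + S2.card + S3.card + S4.card :=
          Nat.add_le_add_right (Nat.add_le_add_right (Finset.card_union_le _ _) _) _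
  calc (N : ℕ∞) ≤ ((S1.card + S2.card + S3.card + S4.card : ℕ) : ℕ∞) := by
        exact_mod_cast hNle
    _ = (S1.card : ℕ∞) + S2.card + S3.card + S4.card := by push_cast; ring
    _ ≤ fP (J r (k' + 1)) m s + fP (J r (k' + 1)) m s
        + fP (J r k') m ((s + 1) / 2) + fP (J r k') m ((s + 1) / 2) :=
          add_le_add (add_le_add (add_le_add hb1 hb2) hb3) hb4
    _ = 2 * fP (J r (k' + 1)) m s + 2 * fP (J r k') m ((s + 1) / 2) := by ring
end

section
/- For all positive integers r, k, s, t with t a power of 2 and 2^{k−1} ≤ s ≤ t, we have f_{r,k}(t,s) ≤ r·2^{k−1}·t²/s. -/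
open Filter

lemma minor_lift {M N T' T r k : ℕ} {e : Fin M → Fin N} {f : Fin T' → Fin T}
    (he : StrictMono e) (hf : StrictMono f) {A : Fin N → Fin T → Bool}
    {B : Fin M → Fin T' → Bool}
    (hAB : ∀ i j, B i j = true → A (e i) (f j) = true)
    (h : IntervalMinor (J r k) B) : IntervalMinor (J r k) A := by
  obtain ⟨rlo, rhi, clo, chi, h1, h2, h3, h4, h5⟩ := h
  refine ⟨e ∘ rlo, e ∘ rhi, f ∘ clo, f ∘ chi,
      fun a => he.monotone (h1 a), fun a b hab => he (h2 a b hab),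
      fun a => hf.monotone (h3 a), fun a b hab => hf (h4 a b hab), ?_⟩
  intro a b hp
  obtain ⟨i, j, hi1, hi2, hj1, hj2, hone⟩ := h5 a b hp
  exact ⟨e i, f j, he.monotone hi1, he.monotone hi2, hf.monotone hj1,
    hf.monotone hj2, hAB i j hone⟩

lemma lift_back {M N T' T r k h : ℕ} {e : Fin M → Fin N} {f : Fin T' → Fin T}
    (he : StrictMono e) (hf : StrictMono f) (hhT : h < T)
    (hfh : ∀ j, (f j : ℕ) < h)
    {A : Fin N → Fin T → Bool} {B : Fin M → Fin T' → Bool}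
    (hAB : ∀ i j, B i j = true → A (e i) (f j) = true)
    (hone : ∀ b : Fin M, ∃ j : Fin T, h ≤ (j : ℕ) ∧ A (e b) j = true)
    (hm : IntervalMinor (J r k) B) : IntervalMinor (J r (k+1)) A := by
  obtain ⟨rlo, rhi, clo, chi, h1, h2, h3, h4, h5⟩ := hm
  refine ⟨e ∘ rlo, e ∘ rhi, Fin.snoc (fun b => f (clo b)) ⟨h, hhT⟩,
      Fin.snoc (fun b => f (chi b)) ⟨T-1, by omega⟩,
      fun a => he.monotone (h1 a), fun a b hab => he (h2 a b hab), ?_, ?_, ?_⟩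
  · intro b
    induction b using Fin.lastCases with
    | last => simp only [Fin.snoc_last]; exact Fin.mk_le_mk.mpr (by omega)
    | cast b => simp only [Fin.snoc_castSucc]; exact hf.monotone (h3 b)
  · intro b b' hlt
    induction b' using Fin.lastCases with
    | last =>
      induction b using Fin.lastCases with
      | last => exact absurd hlt (lt_irrefl _)
      | cast b =>
        simp only [Fin.snoc_last, Fin.snoc_castSucc]
        exact Fin.lt_def.mpr (hfh (chi b))
    | cast b' =>
      induction b using Fin.lastCases with
      | last => exact absurd (hlt.trans (Fin.castSucc_lt_last b')) (lt_irrefl _)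
      | cast b =>
        simp only [Fin.snoc_castSucc]
        exact hf (h4 b b' (Fin.castSucc_lt_castSucc_iff.mp hlt))
  · intro a b _
    induction b using Fin.lastCases with
    | last =>
      obtain ⟨j, hj1, hj2⟩ := hone (rlo a)
      refine ⟨e (rlo a), j, le_refl _, he.monotone (h1 a), ?_, ?_, hj2⟩
      · simp only [Fin.snoc_last]; exact Fin.le_def.mpr hj1
      · simp only [Fin.snoc_last]; exact Fin.le_def.mpr (show (j:ℕ) ≤ T-1 by have := j.isLt; omega)
    | cast b =>
      obtain ⟨i, j, hi1, hi2, hj1, hj2, hone'⟩ := h5 a b rfl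
      simp only [Fin.snoc_castSucc]
      exact ⟨e i, f j, he.monotone hi1, he.monotone hi2, hf.monotone hj1,
        hf.monotone hj2, hAB i j hone'⟩

lemma lift_front {M N T' T r k h : ℕ} {e : Fin M → Fin N} {f : Fin T' → Fin T}
    (he : StrictMono e) (hf : StrictMono f) (hh0 : 0 < h) (hhT : h ≤ T)
    (hfh : ∀ j, h ≤ (f j : ℕ))
    {A : Fin N → Fin T → Bool} {B : Fin M → Fin T' → Bool}
    (hAB : ∀ i j, B i j = true → A (e i) (f j) = true)
    (hone : ∀ b : Fin M, ∃ j : Fin T, (j : ℕ) < h ∧ A (e b) j = true)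
    (hm : IntervalMinor (J r k) B) : IntervalMinor (J r (k+1)) A := by
  obtain ⟨rlo, rhi, clo, chi, h1, h2, h3, h4, h5⟩ := hm
  refine ⟨e ∘ rlo, e ∘ rhi, Fin.cons ⟨0, by omega⟩ (fun b => f (clo b)),
      Fin.cons ⟨h-1, by omega⟩ (fun b => f (chi b)),
      fun a => he.monotone (h1 a), fun a b hab => he (h2 a b hab), ?_, ?_, ?_⟩
  · intro b
    induction b using Fin.cases with
    | zero => simp only [Fin.cons_zero]; exact Fin.mk_le_mk.mpr (by omega)
    | succ b => simp only [Fin.cons_succ]; exact hf.monotone (h3 b)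
  · intro b b' hlt
    induction b' using Fin.cases with
    | zero => exact absurd hlt (Fin.not_lt_zero b).elim
    | succ b' =>
      induction b using Fin.cases with
      | zero =>
        simp only [Fin.cons_zero, Fin.cons_succ]
        exact Fin.lt_def.mpr (show h - 1 < (f (clo b') : ℕ) by have := hfh (clo b'); omega)
      | succ b =>
        simp only [Fin.cons_succ]
        exact hf (h4 b b' (Fin.succ_lt_succ_iff.mp hlt))
  · intro a b _
    induction b using Fin.cases with
    | zero =>
      obtain ⟨j, hj1, hj2⟩ := hone (rlo a)
      refine ⟨e (rlo a), j, le_refl _, he.monotone (h1 a), ?_, ?_, hj2⟩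
      · simp only [Fin.cons_zero]; exact Fin.le_def.mpr (show (0:ℕ) ≤ (j:ℕ) by omega)
      · simp only [Fin.cons_zero]; exact Fin.le_def.mpr (show (j:ℕ) ≤ h-1 by omega)
    | succ b =>
      obtain ⟨i, j, hi1, hi2, hj1, hj2, hone'⟩ := h5 a b rfl
      simp only [Fin.cons_succ]
      exact ⟨e i, f j, he.monotone hi1, he.monotone hi2, hf.monotone hj1,
        hf.monotone hj2, hAB i j hone'⟩

lemma base1 {N t r s : ℕ} (ht : 0 < t) (hs : 0 < s) (hr : 0 < r)
    {A : Fin N → Fin t → Bool}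
    (hrow : ∀ a, s ≤ (Finset.univ.filter fun j => A a j = true).card)
    (hav : ¬ IntervalMinor (J r 1) A) : N ≤ r - 1 := by
  by_contra hcon
  have hrN : r ≤ N := by omega
  apply hav
  refine ⟨fun a => ⟨a.1, lt_of_lt_of_le a.isLt hrN⟩, fun a => ⟨a.1, lt_of_lt_of_le a.isLt hrN⟩,
      fun _ => ⟨0, ht⟩, fun _ => ⟨t-1, by omega⟩,
      fun a => le_refl _, fun a b hab => Fin.lt_def.mpr (Fin.lt_def.mp hab),
      fun a => Fin.le_def.mpr (show (0:ℕ) ≤ t-1 from Nat.zero_le _), ?_, ?_⟩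
  · intro a b hab
    exact absurd (Fin.lt_def.mp hab) (by have := a.isLt; have := b.isLt; omega)
  · intro a b _
    have hpos : 0 < (Finset.univ.filter fun j => A ⟨a.1, lt_of_lt_of_le a.isLt hrN⟩ j = true).card :=
      lt_of_lt_of_le hs (hrow _)
    obtain ⟨j, hj⟩ := Finset.card_pos.mp hpos
    rw [Finset.mem_filter] at hj
    exact ⟨⟨a.1, lt_of_lt_of_le a.isLt hrN⟩, j, le_refl _, le_refl _,
      Fin.le_def.mpr (show (0:ℕ) ≤ (j:ℕ) from Nat.zero_le _), Fin.le_def.mpr (show (j:ℕ) ≤ t-1 by have := j.isLt; omega), hj.2⟩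

def jL (i : ℕ) (j : Fin (2^i)) : Fin (2^(i+1)) := ⟨j.1, by
  have h := j.isLt
  have h2 : (2:ℕ)^(i+1) = 2^i + 2^i := by rw [pow_succ]; ring
  omega⟩

def jR (i : ℕ) (j : Fin (2^i)) : Fin (2^(i+1)) := ⟨2^i + j.1, by
  have h := j.isLt
  have h2 : (2:ℕ)^(i+1) = 2^i + 2^i := by rw [pow_succ]; ring
  omega⟩

lemma jL_strictMono (i : ℕ) : StrictMono (jL i) := fun _ _ h => h

lemma jR_strictMono (i : ℕ) : StrictMono (jR i) := fun _ _ h => Nat.add_lt_add_left h _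

def cntL {N i : ℕ} (A : Fin N → Fin (2^(i+1)) → Bool) (a : Fin N) : ℕ :=
  (Finset.univ.filter fun j : Fin (2^i) => A a (jL i j) = true).card

def cntR {N i : ℕ} (A : Fin N → Fin (2^(i+1)) → Bool) (a : Fin N) : ℕ :=
  (Finset.univ.filter fun j : Fin (2^i) => A a (jR i j) = true).card

lemma cnt_key {N i : ℕ} (A : Fin N → Fin (2^(i+1)) → Bool) (s : ℕ) (a : Fin N)
    (hrow : s ≤ (Finset.univ.filter fun j => A a j = true).card) :
    s ≤ cntL A a + cntR A a := by
  have hsub : (Finset.univ.filter fun j : Fin (2^(i+1)) => A a j = true) ⊆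
      ((Finset.univ.filter fun j : Fin (2^i) => A a (jL i j) = true).image (jL i)) ∪
      ((Finset.univ.filter fun j : Fin (2^i) => A a (jR i j) = true).image (jR i)) := by
    intro j hj
    simp only [Finset.mem_filter, Finset.mem_univ, true_and] at hj
    rcases Nat.lt_or_ge j.1 (2^i) with hlt | hge
    · apply Finset.mem_union_left
      refine Finset.mem_image.mpr ⟨⟨j.1, hlt⟩, ?_, ?_⟩
      · simp only [Finset.mem_filter, Finset.mem_univ, true_and]
        have hjj : jL i ⟨j.1, hlt⟩ = j := Fin.ext rfl
        rw [hjj]; exact hj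
      · exact Fin.ext rfl
    · apply Finset.mem_union_right
      have hlt2 : j.1 - 2^i < 2^i := by have := j.isLt; have h2 : (2:ℕ)^(i+1) = 2^i + 2^i := by rw [pow_succ]; ring
                                        omega
      refine Finset.mem_image.mpr ⟨⟨j.1 - 2^i, hlt2⟩, ?_, ?_⟩
      · simp only [Finset.mem_filter, Finset.mem_univ, true_and]
        have hjj : jR i ⟨j.1 - 2^i, hlt2⟩ = j := by
          apply Fin.ext
          show 2^i + (j.1 - 2^i) = j.1
          omega
        rw [hjj]; exact hj
      · apply Fin.ext
        show 2^i + (j.1 - 2^i) = j.1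
        omega
  calc s ≤ _ := hrow
    _ ≤ _ := Finset.card_le_card hsub
    _ ≤ _ := Finset.card_union_le _ _
    _ ≤ cntL A a + cntR A a := add_le_add Finset.card_image_le Finset.card_image_le

lemma mainBound (r : ℕ) (hr : 0 < r) :
    ∀ i k s N, ∀ A : Fin N → Fin (2^i) → Bool, 0 < k → 2^(k-1) ≤ s → s ≤ 2^i →
    (∀ a, s ≤ (Finset.univ.filter fun j => A a j = true).card) →
    ¬ IntervalMinor (J r k) A → N * s ≤ r * 2^(k-1) * (2^i)^2 := by
  intro i
  induction i with
  | zero =>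
    intro k s N A hk hks hsi hrow hav
    have h20 : (2:ℕ)^0 = 1 := pow_zero 2
    have hk1 : k = 1 := by
      by_contra hne
      have : 1 < 2^(k-1) := Nat.one_lt_two_pow_iff.mpr (by omega)
      omega
    subst hk1
    have hb := base1 (by omega) (by omega) hr hrow hav
    have h21 : (2:ℕ)^(1-1) = 1 := rfl
    have : N * s ≤ (r-1) * 1 := Nat.mul_le_mul hb (by omega)
    have hgoal : r * 2^(1-1) * ((2:ℕ)^0)^2 = r := by norm_num
    omega
  | succ i ih =>
    intro k s N A hk hks hsi hrow hav
    have hth : 2^(i+1) = 2^i + 2^i := by rw [pow_succ]; ring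
    have h2ipos : 0 < 2^i := Nat.pow_pos (by norm_num)
    rcases Nat.lt_or_ge k 2 with hk2 | hk2
    · -- k = 1
      have hk1 : k = 1 := by omega
      subst hk1
      have hb := base1 (by omega) (by have : 0 < 2^(1-1) := Nat.one_pos; omega) hr hrow hav
      have hsq : 2^(i+1) ≤ (2^(i+1))^2 := by nlinarith
      calc N * s ≤ r * (2^(i+1))^2 := Nat.mul_le_mul (by omega) (le_trans hsi hsq)
        _ = r * 2^(1-1) * (2^(i+1))^2 := by norm_num
    · obtain ⟨k', rfl⟩ : ∃ k', k = k' + 1 := ⟨k-1, by omega⟩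
      have hk' : 0 < k' := by omega
      have hks' : 2^k' ≤ s := by simpa using hks
      have hek : 2^k' = 2*2^(k'-1) := by
        rw [← pow_succ']
        congr 1
        omega
      set s2 := (s+1)/2 with hs2def
      have key : ∀ a, s ≤ cntL A a + cntR A a := fun a => cnt_key A s a (hrow a)
      have hs2k : 2^(k'-1) ≤ s2 := by omega
      have hs2i : s2 ≤ 2^i := by omega
      set S1 : Finset (Fin N) := Finset.univ.filter (fun a => cntR A a = 0) with hS1
      set S2 : Finset (Fin N) := Finset.univ.filter (fun a => cntL A a = 0) with hS2
      set S3 : Finset (Fin N) :=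
        Finset.univ.filter (fun a => 0 < cntR A a ∧ s2 ≤ cntL A a) with hS3
      set S4 : Finset (Fin N) :=
        Finset.univ.filter (fun a => 0 < cntL A a ∧ s2 ≤ cntR A a) with hS4
      have hcntLle : ∀ a, cntL A a ≤ 2^i := by
        intro a
        have := Finset.card_filter_le (Finset.univ : Finset (Fin (2^i)))
          (fun j => A a (jL i j) = true)
        simpa [cntL] using this
      have hcntRle : ∀ a, cntR A a ≤ 2^i := by
        intro a
        have := Finset.card_filter_le (Finset.univ : Finset (Fin (2^i)))
          (fun j => A a (jR i j) = true)
        simpa [cntR] using this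
      -- Block S1 : rows entirely in the left half
      have hB1 : S1.card * s ≤ r * 2^k' * (2^i)^2 := by
        rcases Nat.lt_or_ge (2^i) s with hgt | hle
        · have hempty : S1 = ∅ := by
            rw [hS1, Finset.eq_empty_iff_forall_notMem]
            intro a ha
            rw [Finset.mem_filter] at ha
            have h1 := key a
            have h2 := hcntLle a
            omega
          rw [hempty]; simp
        · set M := S1.card with hM
          let e := S1.orderEmbOfFin hM.symm
          have hprop : ∀ b, cntR A (e b) = 0 := by
            intro b
            exact (Finset.mem_filter.mp (S1.orderEmbOfFin_mem hM.symm b)).2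
          have hrow' : ∀ b : Fin M,
              s ≤ (Finset.univ.filter fun j : Fin (2^i) => A (e b) (jL i j) = true).card := by
            intro b
            have h1 := key (e b)
            have h2 := hprop b
            show s ≤ cntL A (e b)
            omega
          have havoid' : ¬ IntervalMinor (J r (k'+1)) (fun b j => A (e b) (jL i j)) := by
            intro hc
            exact hav (minor_lift e.strictMono (jL_strictMono i) (fun p q hpq => hpq) hc)
          exact ih (k'+1) s M _ (by omega) hks hle hrow' havoid'
      -- Block S2 : rows entirely in the right half
      have hB2 : S2.card * s ≤ r * 2^k' * (2^i)^2 := by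
        rcases Nat.lt_or_ge (2^i) s with hgt | hle
        · have hempty : S2 = ∅ := by
            rw [hS2, Finset.eq_empty_iff_forall_notMem]
            intro a ha
            rw [Finset.mem_filter] at ha
            have h1 := key a
            have h2 := hcntRle a
            omega
          rw [hempty]; simp
        · set M := S2.card with hM
          let e := S2.orderEmbOfFin hM.symm
          have hprop : ∀ b, cntL A (e b) = 0 := by
            intro b
            exact (Finset.mem_filter.mp (S2.orderEmbOfFin_mem hM.symm b)).2
          have hrow' : ∀ b : Fin M,
              s ≤ (Finset.univ.filter fun j : Fin (2^i) => A (e b) (jR i j) = true).card := by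
            intro b
            have h1 := key (e b)
            have h2 := hprop b
            show s ≤ cntR A (e b)
            omega
          have havoid' : ¬ IntervalMinor (J r (k'+1)) (fun b j => A (e b) (jR i j)) := by
            intro hc
            exact hav (minor_lift e.strictMono (jR_strictMono i) (fun p q hpq => hpq) hc)
          exact ih (k'+1) s M _ (by omega) hks hle hrow' havoid'
      -- Block S3 : many ones left, at least one right
      have hB3 : S3.card * s ≤ r * 2^k' * (2^i)^2 := by
        set M := S3.card with hM
        let e := S3.orderEmbOfFin hM.symm
        have hprop : ∀ b, 0 < cntR A (e b) ∧ s2 ≤ cntL A (e b) := by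
          intro b
          exact (Finset.mem_filter.mp (S3.orderEmbOfFin_mem hM.symm b)).2
        have hrow' : ∀ b : Fin M,
            s2 ≤ (Finset.univ.filter fun j : Fin (2^i) => A (e b) (jL i j) = true).card := by
          intro b
          show s2 ≤ cntL A (e b)
          exact (hprop b).2
        have hone : ∀ b : Fin M, ∃ j : Fin (2^(i+1)), 2^i ≤ (j : ℕ) ∧ A (e b) j = true := by
          intro b
          obtain ⟨j0, hj0⟩ := Finset.card_pos.mp (hprop b).1
          rw [Finset.mem_filter] at hj0
          exact ⟨jR i j0, Nat.le_add_right _ _, hj0.2⟩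
        have havoid' : ¬ IntervalMinor (J r k') (fun b j => A (e b) (jL i j)) := by
          intro hc
          exact hav (lift_back e.strictMono (jL_strictMono i) (by omega)
            (fun j => j.isLt) (fun p q hpq => hpq) hone hc)
        have hmain := ih k' s2 M _ hk' hs2k hs2i hrow' havoid'
        calc M * s ≤ M * (2*s2) := Nat.mul_le_mul_left M (by omega)
          _ = 2 * (M * s2) := by ring
          _ ≤ 2 * (r * 2^(k'-1) * (2^i)^2) := Nat.mul_le_mul_left 2 hmain
          _ = r * (2*2^(k'-1)) * (2^i)^2 := by ring
          _ = r * 2^k' * (2^i)^2 := by rw [← hek]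
      -- Block S4 : many ones right, at least one left
      have hB4 : S4.card * s ≤ r * 2^k' * (2^i)^2 := by
        set M := S4.card with hM
        let e := S4.orderEmbOfFin hM.symm
        have hprop : ∀ b, 0 < cntL A (e b) ∧ s2 ≤ cntR A (e b) := by
          intro b
          exact (Finset.mem_filter.mp (S4.orderEmbOfFin_mem hM.symm b)).2
        have hrow' : ∀ b : Fin M,
            s2 ≤ (Finset.univ.filter fun j : Fin (2^i) => A (e b) (jR i j) = true).card := by
          intro b
          show s2 ≤ cntR A (e b)
          exact (hprop b).2
        have hone : ∀ b : Fin M, ∃ j : Fin (2^(i+1)), (j : ℕ) < 2^i ∧ A (e b) j = true := by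
          intro b
          obtain ⟨j0, hj0⟩ := Finset.card_pos.mp (hprop b).1
          rw [Finset.mem_filter] at hj0
          exact ⟨jL i j0, j0.isLt, hj0.2⟩
        have havoid' : ¬ IntervalMinor (J r k') (fun b j => A (e b) (jR i j)) := by
          intro hc
          exact hav (lift_front e.strictMono (jR_strictMono i) h2ipos (by omega)
            (fun j => Nat.le_add_right _ _) (fun p q hpq => hpq) hone hc)
        have hmain := ih k' s2 M _ hk' hs2k hs2i hrow' havoid'
        calc M * s ≤ M * (2*s2) := Nat.mul_le_mul_left M (by omega)
          _ = 2 * (M * s2) := by ring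
          _ ≤ 2 * (r * 2^(k'-1) * (2^i)^2) := Nat.mul_le_mul_left 2 hmain
          _ = r * (2*2^(k'-1)) * (2^i)^2 := by ring
          _ = r * 2^k' * (2^i)^2 := by rw [← hek]
      -- combine
      have hcover : (Finset.univ : Finset (Fin N)) ⊆ S1 ∪ S2 ∪ S3 ∪ S4 := by
        intro a _
        simp only [hS1, hS2, hS3, hS4, Finset.mem_union, Finset.mem_filter,
          Finset.mem_univ, true_and]
        have := key a
        omega
      have hN : N ≤ S1.card + S2.card + S3.card + S4.card := by
        have h0 : (Finset.univ : Finset (Fin N)).card = N := by simp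
        have h1 := Finset.card_le_card hcover
        have h2 := Finset.card_union_le (S1 ∪ S2 ∪ S3) S4
        have h3 := Finset.card_union_le (S1 ∪ S2) S3
        have h4 := Finset.card_union_le S1 S2
        omega
      have hexp : r * 2^((k'+1)-1) * (2^(i+1))^2 = 4 * (r * 2^k' * (2^i)^2) := by
        have h1 : (k'+1)-1 = k' := rfl
        rw [h1, pow_succ]
        ring
      calc N * s ≤ (S1.card + S2.card + S3.card + S4.card) * s := Nat.mul_le_mul_right s hN
        _ = S1.card * s + S2.card * s + S3.card * s + S4.card * s := by ring
        _ ≤ r * 2^k' * (2^i)^2 + r * 2^k' * (2^i)^2 + r * 2^k' * (2^i)^2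
            + r * 2^k' * (2^i)^2 := add_le_add (add_le_add (add_le_add hB1 hB2) hB3) hB4
        _ = 4 * (r * 2^k' * (2^i)^2) := by ring
        _ = r * 2^((k'+1)-1) * (2^(i+1))^2 := hexp.symm



/-- For all positive integers `r, k, s, t` with `t` a power of 2
and `2^{k−1} ≤ s ≤ t`, we have `f_{r,k}(t,s) ≤ r·2^{k−1}·t²/s`. (Since
`f_{r,k}(t,s)` is an extended natural number, this is equivalent to the bound
with the floor `r·2^{k−1}·t²/s` taken in the natural numbers.) -/
theorem stmt18 (r k s t : ℕ) (hr : 0 < r) (hk : 0 < k) (hs : 0 < s)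
    (htpow : ∃ i : ℕ, t = 2 ^ i) (hsl : 2 ^ (k - 1) ≤ s) (hst : s ≤ t) :
    fP (J r k) t s ≤ ((r * 2 ^ (k - 1) * t ^ 2 / s : ℕ) : ℕ∞) := by
  obtain ⟨i, rfl⟩ := htpow
  refine sSup_le ?_
  rintro x ⟨N, rfl, A, hrow, hav⟩
  have hb := mainBound r hr i k s N A hk hsl hst hrow hav
  have hN : N ≤ r * 2^(k-1) * (2^i)^2 / s := (Nat.le_div_iff_mul_le hs).mpr hb
  exact_mod_cast hN
end
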